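/- arXiv:2508.12757 — 10 statements merged into one kernel-verified Lean document; each statement's English description precedes it below -/
import Mathlib

section
/- Every nonzero alternating three-form on a four-dimensional complex vector space is decomposable: if ω is a three-form on V = Fin 4 → ℂ with ω ≠ 0, then there exist linear functionals f₁, f₂, f₃ : V →ₗ[ℂ] ℂ such that for all u, v, w ∈ V, ω(u,v,w) equals the determinant of the 3×3 matrix with rows (f₁u, f₁v, f₁w), (f₂u, f₂v, f₂w), (f₃u, f₃v, f₃w); that is, ω = f₁ ∧ f₂ ∧ f₃. In particular every nonzero three-form in four variables has rank three. -/
noncomputable section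

open Matrix

private def e4 : Module.Basis (Fin 4) ℂ (Fin 4 → ℂ) := Pi.basisFun ℂ (Fin 4)

private lemma key_ext (f g : AlternatingMap ℂ (Fin 4 → ℂ) ℂ (Fin 3))
    (h1 : f ![e4 0, e4 1, e4 2] = g ![e4 0, e4 1, e4 2])
    (h2 : f ![e4 0, e4 1, e4 3] = g ![e4 0, e4 1, e4 3])
    (h3 : f ![e4 0, e4 2, e4 3] = g ![e4 0, e4 2, e4 3])
    (h4 : f ![e4 1, e4 2, e4 3] = g ![e4 1, e4 2, e4 3]) : f = g := by
  have hmono : ∀ w : Fin 3 → Fin 4, StrictMono w →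
      (f fun i => e4 (w i)) = g fun i => e4 (w i) := by
    intro w hw
    have h01 := hw (show (0:Fin 3) < 1 by decide)
    have h12 := hw (show (1:Fin 3) < 2 by decide)
    have hcase : w = ![0,1,2] ∨ w = ![0,1,3] ∨ w = ![0,2,3] ∨ w = ![1,2,3] := by
      have key : ∀ w : Fin 3 → Fin 4, w 0 < w 1 → w 1 < w 2 →
          w = ![0,1,2] ∨ w = ![0,1,3] ∨ w = ![0,2,3] ∨ w = ![1,2,3] := by decide
      exact key w h01 h12
    have hv : ∀ (a b c : Fin 4), (fun i => e4 (![a,b,c] i)) = ![e4 a, e4 b, e4 c] := by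
      intro a b c; funext i; fin_cases i <;> rfl
    rcases hcase with h|h|h|h <;> subst h <;> rw [hv] <;> assumption
  apply Module.Basis.ext_alternating e4
  intro v hv
  set σ := Tuple.sort v with hσ
  have hsm : StrictMono (v ∘ σ) :=
    (Tuple.monotone_sort v).strictMono_of_injective (hv.comp σ.injective)
  have heq : (f ((fun i => e4 (v i)) ∘ σ)) = g ((fun i => e4 (v i)) ∘ σ) :=
    hmono (v ∘ σ) hsm
  have hf := f.map_perm (fun i => e4 (v i)) σ
  have hg := g.map_perm (fun i => e4 (v i)) σ
  rw [hf, hg] at heq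
  rcases Int.units_eq_one_or (Equiv.Perm.sign σ) with h|h <;> rw [h] at heq <;>
    simpa using heq

private lemma aux (ω : AlternatingMap ℂ (Fin 4 → ℂ) ℂ (Fin 3))
    (f₁ f₂ f₃ : (Fin 4 → ℂ) →ₗ[ℂ] ℂ)
    (h1 : ω ![e4 0, e4 1, e4 2] = Matrix.det !![f₁ (e4 0), f₁ (e4 1), f₁ (e4 2);
      f₂ (e4 0), f₂ (e4 1), f₂ (e4 2); f₃ (e4 0), f₃ (e4 1), f₃ (e4 2)])
    (h2 : ω ![e4 0, e4 1, e4 3] = Matrix.det !![f₁ (e4 0), f₁ (e4 1), f₁ (e4 3);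
      f₂ (e4 0), f₂ (e4 1), f₂ (e4 3); f₃ (e4 0), f₃ (e4 1), f₃ (e4 3)])
    (h3 : ω ![e4 0, e4 2, e4 3] = Matrix.det !![f₁ (e4 0), f₁ (e4 2), f₁ (e4 3);
      f₂ (e4 0), f₂ (e4 2), f₂ (e4 3); f₃ (e4 0), f₃ (e4 2), f₃ (e4 3)])
    (h4 : ω ![e4 1, e4 2, e4 3] = Matrix.det !![f₁ (e4 1), f₁ (e4 2), f₁ (e4 3);
      f₂ (e4 1), f₂ (e4 2), f₂ (e4 3); f₃ (e4 1), f₃ (e4 2), f₃ (e4 3)]) :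
    ∀ u v w : Fin 4 → ℂ,
      ω ![u, v, w] =
        Matrix.det !![f₁ u, f₁ v, f₁ w; f₂ u, f₂ v, f₂ w; f₃ u, f₃ v, f₃ w] := by
  set F : (Fin 4 → ℂ) →ₗ[ℂ] (Fin 3 → ℂ) := LinearMap.pi ![f₁, f₂, f₃] with hF
  set Ω : AlternatingMap ℂ (Fin 4 → ℂ) ℂ (Fin 3) :=
    Matrix.detRowAlternating.compLinearMap F with hΩ
  have hpt : ∀ u v w : Fin 4 → ℂ,
      Ω ![u, v, w] =
        Matrix.det !![f₁ u, f₁ v, f₁ w; f₂ u, f₂ v, f₂ w; f₃ u, f₃ v, f₃ w] := by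
    intro u v w
    have : Ω ![u, v, w] =
        Matrix.det (Matrix.of fun i j => (![f₁, f₂, f₃] j) (![u, v, w] i)) := rfl
    rw [this, ← Matrix.det_transpose]
    congr 1
    ext i j
    fin_cases i <;> fin_cases j <;> rfl
  have hωΩ : ω = Ω := by
    apply key_ext <;> rw [hpt] <;> assumption
  intro u v w
  rw [hωΩ, hpt]

set_option maxHeartbeats 1600000 in
/-- Every nonzero alternating three-form on a four-dimensional complex vector space is
decomposable: it is the wedge product of three linear functionals. -/
theorem threeForm_fourVars_decomposable
    (ω : AlternatingMap ℂ (Fin 4 → ℂ) ℂ (Fin 3)) (hω : ω ≠ 0) :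
    ∃ f₁ f₂ f₃ : (Fin 4 → ℂ) →ₗ[ℂ] ℂ, ∀ u v w : Fin 4 → ℂ,
      ω ![u, v, w] =
        Matrix.det !![f₁ u, f₁ v, f₁ w; f₂ u, f₂ v, f₂ w; f₃ u, f₃ v, f₃ w] := by

  classical
  set c1 := ω ![e4 0, e4 1, e4 2] with hc1
  set c2 := ω ![e4 0, e4 1, e4 3] with hc2
  set c3 := ω ![e4 0, e4 2, e4 3] with hc3
  set c4 := ω ![e4 1, e4 2, e4 3] with hc4
  have hproj : ∀ (i j : Fin 4), (LinearMap.proj i : (Fin 4 → ℂ) →ₗ[ℂ] ℂ) (e4 j)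
      = if i = j then 1 else 0 := by
    intro i j
    simp [e4, Pi.basisFun_apply, Pi.single_apply]
  by_cases h4 : c4 ≠ 0
  · refine ⟨c4 • LinearMap.proj 1 + c3 • LinearMap.proj 0,
      LinearMap.proj 2 - (c2 / c4) • LinearMap.proj 0,
      LinearMap.proj 3 + (c1 / c4) • LinearMap.proj 0, aux ω _ _ _ ?_ ?_ ?_ ?_⟩ <;>
      norm_num [Matrix.det_fin_three, hproj, LinearMap.add_apply, LinearMap.sub_apply,
          LinearMap.smul_apply] <;>
        (try simp (config := { decide := true })) <;> (try field_simp) <;> (try ring)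
  · push_neg at h4
    by_cases h3 : c3 ≠ 0
    · refine ⟨c3 • LinearMap.proj 0 + c4 • LinearMap.proj 1,
        LinearMap.proj 2 + (c2 / c3) • LinearMap.proj 1,
        LinearMap.proj 3 - (c1 / c3) • LinearMap.proj 1, aux ω _ _ _ ?_ ?_ ?_ ?_⟩ <;>
        norm_num [Matrix.det_fin_three, hproj, LinearMap.add_apply, LinearMap.sub_apply,
          LinearMap.smul_apply] <;>
        (try simp (config := { decide := true })) <;> (try field_simp) <;> (try ring)
    · push_neg at h3
      by_cases h2 : c2 ≠ 0
      · refine ⟨c2 • LinearMap.proj 0 - c4 • LinearMap.proj 2,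
          LinearMap.proj 1 + (c3 / c2) • LinearMap.proj 2,
          LinearMap.proj 3 + (c1 / c2) • LinearMap.proj 2, aux ω _ _ _ ?_ ?_ ?_ ?_⟩ <;>
          norm_num [Matrix.det_fin_three, hproj, LinearMap.add_apply, LinearMap.sub_apply,
          LinearMap.smul_apply] <;>
        (try simp (config := { decide := true })) <;> (try field_simp) <;> (try ring)
      · push_neg at h2
        have h1 : c1 ≠ 0 := by
          intro h1
          apply hω
          apply key_ext ω 0 <;>
            simp only [AlternatingMap.zero_apply, ← hc1, ← hc2, ← hc3, ← hc4, h1, h2, h3, h4]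
        refine ⟨c1 • LinearMap.proj 0 + c4 • LinearMap.proj 3,
          LinearMap.proj 1 - (c3 / c1) • LinearMap.proj 3,
          LinearMap.proj 2 - (c2 / c1) • LinearMap.proj 3, aux ω _ _ _ ?_ ?_ ?_ ?_⟩ <;>
          norm_num [Matrix.det_fin_three, hproj, LinearMap.add_apply, LinearMap.sub_apply,
          LinearMap.smul_apply] <;>
        (try simp (config := { decide := true })) <;> (try field_simp) <;> (try ring) <;>
        (try (rw [← hc2]; simp [h2]))
end
end

section
/- Normal form of rank-five three-forms in five variables: let ω be a three-form on V = Fin 5 → ℂ of maximal rank, i.e. the only v ∈ V with ω(v,u,w) = 0 for all u,w ∈ V is v = 0. Then ω is GL₅-equivalent to e^{123} + e^{145}: there exists a linear automorphism g : V ≃ₗ[ℂ] V such that ω(g u, g v, g w) = (e^{123} + e^{145})(u,v,w) for all u, v, w ∈ V. -/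
noncomputable section

/-- `eDet i j k u v w` is the three-form `e^{ijk}` evaluated at `(u, v, w)`:
the determinant of the 3×3 matrix with rows `(uᵢ, vᵢ, wᵢ)`, `(uⱼ, vⱼ, wⱼ)`, `(uₖ, vₖ, wₖ)`. -/
def eDet {n : ℕ} (i j k : Fin n) (u v w : Fin n → ℂ) : ℂ :=
  Matrix.det !![u i, v i, w i; u j, v j, w j; u k, v k, w k]

namespace ThreeFormAux

abbrev V : Type := Fin 5 → ℂ

/-- Evaluation of the three-form on a triple. -/
def tf (ω : AlternatingMap ℂ V ℂ (Fin 3)) (x y z : V) : ℂ := ω ![x, y, z]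

variable {ω : AlternatingMap ℂ V ℂ (Fin 3)}

lemma upd0 (a b c x : V) : Function.update ![a, b, c] (0 : Fin 3) x = ![x, b, c] := by
  funext i; fin_cases i <;> simp
lemma upd1 (a b c x : V) : Function.update ![a, b, c] (1 : Fin 3) x = ![a, x, c] := by
  funext i; fin_cases i <;> simp [Function.update]
lemma upd2 (a b c x : V) : Function.update ![a, b, c] (2 : Fin 3) x = ![a, b, x] := by
  funext i; fin_cases i <;> simp [Function.update]

lemma tf_add₀ (a a' b c : V) : tf ω (a + a') b c = tf ω a b c + tf ω a' b c := by
  have := ω.map_update_add ![a,b,c] 0 a a'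
  simpa [tf, upd0] using this
lemma tf_add₁ (a b b' c : V) : tf ω a (b + b') c = tf ω a b c + tf ω a b' c := by
  have := ω.map_update_add ![a,b,c] 1 b b'
  simpa [tf, upd1] using this
lemma tf_add₂ (a b c c' : V) : tf ω a b (c + c') = tf ω a b c + tf ω a b c' := by
  have := ω.map_update_add ![a,b,c] 2 c c'
  simpa [tf, upd2] using this
lemma tf_smul₀ (r : ℂ) (a b c : V) : tf ω (r • a) b c = r * tf ω a b c := by
  have := ω.map_update_smul ![a,b,c] 0 r a
  simpa [tf, upd0] using this
lemma tf_smul₁ (r : ℂ) (a b c : V) : tf ω a (r • b) c = r * tf ω a b c := by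
  have := ω.map_update_smul ![a,b,c] 1 r b
  simpa [tf, upd1] using this
lemma tf_smul₂ (r : ℂ) (a b c : V) : tf ω a b (r • c) = r * tf ω a b c := by
  have := ω.map_update_smul ![a,b,c] 2 r c
  simpa [tf, upd2] using this
lemma tf_swap01 (a b c : V) : tf ω b a c = - tf ω a b c := by
  have := ω.map_swap ![a,b,c] (i := 0) (j := 1) (by decide)
  have h : (![a,b,c] ∘ Equiv.swap (0:Fin 3) 1) = ![b,a,c] := by
    funext i; fin_cases i <;> simp [Equiv.swap_apply_def]
  rw [h] at this; simpa [tf] using this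
lemma tf_swap12 (a b c : V) : tf ω a c b = - tf ω a b c := by
  have := ω.map_swap ![a,b,c] (i := 1) (j := 2) (by decide)
  have h : (![a,b,c] ∘ Equiv.swap (1:Fin 3) 2) = ![a,c,b] := by
    funext i; fin_cases i <;> simp [Equiv.swap_apply_def]
  rw [h] at this; simpa [tf] using this
lemma tf_swap02 (a b c : V) : tf ω c b a = - tf ω a b c := by
  have := ω.map_swap ![a,b,c] (i := 0) (j := 2) (by decide)
  have h : (![a,b,c] ∘ Equiv.swap (0:Fin 3) 2) = ![c,b,a] := by
    funext i; fin_cases i <;> simp [Equiv.swap_apply_def]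
  rw [h] at this; simpa [tf] using this
lemma tf_cyc (a b c : V) : tf ω b c a = tf ω a b c := by
  linear_combination (tf_swap01 (ω := ω) c b a) - (tf_swap02 (ω := ω) a b c)
lemma tf_self01 (a c : V) : tf ω a a c = 0 := by
  have := tf_swap01 (ω := ω) a a c; linear_combination this / 2
lemma tf_self12 (a b : V) : tf ω a b b = 0 := by
  have := tf_swap12 (ω := ω) a b b; linear_combination this / 2
lemma tf_self02 (a b : V) : tf ω a b a = 0 := by
  have := tf_swap02 (ω := ω) a b a; linear_combination this / 2
lemma tf_zero₀ (b c : V) : tf ω 0 b c = 0 := by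
  have := tf_smul₀ (ω := ω) 0 b b c; simpa using this

/-- Step A: some contraction of `ω` has rank four. -/
lemma stepA (hrk : ∀ v : V, (∀ u w : V, ω ![v, u, w] = 0) → v = 0) :
    ∃ v₁ x₂ x₃ x₄ x₅ : V,
      tf ω v₁ x₂ x₃ * tf ω v₁ x₄ x₅ - tf ω v₁ x₂ x₄ * tf ω v₁ x₃ x₅
        + tf ω v₁ x₂ x₅ * tf ω v₁ x₃ x₄ ≠ 0 := by
  by_contra hcon
  push_neg at hcon
  have hcross : ∀ u v x y z w : V,
      tf ω u x y * tf ω v z w + tf ω v x y * tf ω u z w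
      - tf ω u x z * tf ω v y w - tf ω v x z * tf ω u y w
      + tf ω u x w * tf ω v y z + tf ω v x w * tf ω u y z = 0 := by
    intro u v x y z w
    have h1 := hcon (u + v) x y z w
    simp only [tf_add₀] at h1
    linear_combination h1 - hcon u x y z w - hcon v x y z w
  have he0 : (Pi.single 0 1 : V) ≠ 0 := by
    intro h; simpa using congrFun h 0
  set e₀ : V := Pi.single 0 1 with he₀def
  have hne : ∃ u w : V, tf ω e₀ u w ≠ 0 := by
    by_contra hz; push_neg at hz
    exact he0 (hrk e₀ hz)
  obtain ⟨x₂, x₃₀, hx23⟩ := hne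
  set x₃ : V := (tf ω e₀ x₂ x₃₀)⁻¹ • x₃₀ with hx₃def
  have hb23 : tf ω e₀ x₂ x₃ = 1 := by
    rw [hx₃def, tf_smul₂, inv_mul_cancel₀ hx23]
  have hker : ∃ x : V, x ≠ 0 ∧ tf ω e₀ x x₂ = 0 ∧ tf ω e₀ x x₃ = 0 ∧
      tf ω x x₂ x₃ = 0 := by
    let L : V →ₗ[ℂ] (Fin 3 → ℂ) :=
      { toFun := fun x => ![tf ω e₀ x x₂, tf ω e₀ x x₃, tf ω x x₂ x₃]
        map_add' := by
          intro a b; funext i; fin_cases i <;> simp [tf_add₀, tf_add₁]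
        map_smul' := by
          intro r a; funext i; fin_cases i <;> simp [tf_smul₀, tf_smul₁] }
    have hnotinj : ¬ Function.Injective L := by
      intro hinj
      have := LinearMap.finrank_le_finrank_of_injective hinj
      simp [Module.finrank_pi] at this
    rw [Function.not_injective_iff] at hnotinj
    obtain ⟨a, b, hab, hne'⟩ := hnotinj
    have hLx : L (a - b) = 0 := by rw [map_sub, hab, sub_self]
    refine ⟨a - b, sub_ne_zero_of_ne hne', ?_, ?_, ?_⟩
    · simpa [L] using congrFun hLx 0
    · simpa [L] using congrFun hLx 1
    · simpa [L] using congrFun hLx 2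
  obtain ⟨x, hx0, hx2, hx3, hxx⟩ := hker
  have hmem : ∀ a' b' : V, tf ω e₀ a' x₂ = 0 → tf ω e₀ a' x₃ = 0 →
      tf ω e₀ b' x₂ = 0 → tf ω e₀ b' x₃ = 0 → ∀ u' : V, tf ω u' a' b' = 0 := by
    intro p q hp2 hp3 hq2 hq3 u'
    have h0 : tf ω e₀ p q = 0 := by
      have := hcon e₀ p q x₂ x₃
      rw [hb23, hp2, hp3] at this
      linear_combination this
    have := hcross u' e₀ p q x₂ x₃
    rw [hb23, h0, hp2, hp3, hq2, hq3] at this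
    linear_combination this
  apply hx0
  apply hrk
  intro u w
  show tf ω x u w = 0
  set pu := tf ω e₀ u x₂ with hpu
  set su := tf ω e₀ u x₃ with hsu
  set pw := tf ω e₀ w x₂ with hpw
  set sw := tf ω e₀ w x₃ with hsw
  set uK : V := u + pu • x₃ + (-su) • x₂ with huK
  set wK : V := w + pw • x₃ + (-sw) • x₂ with hwK
  have h32 : tf ω e₀ x₃ x₂ = -1 := by rw [tf_swap12 (ω := ω) e₀ x₂ x₃, hb23]
  have huKmem2 : tf ω e₀ uK x₂ = 0 := by
    rw [huK]; simp only [tf_add₁, tf_smul₁]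
    rw [h32, tf_self12]
    linear_combination hpu
  have huKmem3 : tf ω e₀ uK x₃ = 0 := by
    rw [huK]; simp only [tf_add₁, tf_smul₁]
    rw [hb23, tf_self12]
    linear_combination hsu
  have hwKmem2 : tf ω e₀ wK x₂ = 0 := by
    rw [hwK]; simp only [tf_add₁, tf_smul₁]
    rw [h32, tf_self12]
    linear_combination hpw
  have hwKmem3 : tf ω e₀ wK x₃ = 0 := by
    rw [hwK]; simp only [tf_add₁, tf_smul₁]
    rw [hb23, tf_self12]
    linear_combination hsw
  have hu : u = uK + (-pu) • x₃ + su • x₂ := by rw [huK]; module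
  have hw : w = wK + (-pw) • x₃ + sw • x₂ := by rw [hwK]; module
  rw [hu, hw]
  simp only [tf_add₁, tf_add₂, tf_smul₁, tf_smul₂]
  have t1 : tf ω x uK wK = 0 := hmem uK wK huKmem2 huKmem3 hwKmem2 hwKmem3 x
  have t2 : tf ω x uK x₃ = 0 := (tf_cyc x₃ x uK).trans (hmem x uK hx2 hx3 huKmem2 huKmem3 x₃)
  have t3 : tf ω x uK x₂ = 0 := (tf_cyc x₂ x uK).trans (hmem x uK hx2 hx3 huKmem2 huKmem3 x₂)
  have t4 : tf ω x x₃ wK = 0 := (tf_cyc x x₃ wK).symm.trans (hmem wK x hwKmem2 hwKmem3 hx2 hx3 x₃)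
  have t5 : tf ω x x₂ wK = 0 := (tf_cyc x x₂ wK).symm.trans (hmem wK x hwKmem2 hwKmem3 hx2 hx3 x₂)
  have t9 : tf ω x x₃ x₂ = 0 := by rw [tf_swap12 (ω := ω) x x₂ x₃, hxx]; ring
  rw [t1, t2, t3, t4, t5, hxx, t9, tf_self12, tf_self12]
  ring

/-- Step B auxiliary: symplectic normalization assuming the (2,3) entry is nonzero. -/
lemma stepB' (v₁ x₂ x₃ x₄ x₅ : V) (hb : tf ω v₁ x₂ x₃ ≠ 0)
    (hPf : tf ω v₁ x₂ x₃ * tf ω v₁ x₄ x₅ - tf ω v₁ x₂ x₄ * tf ω v₁ x₃ x₅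
      + tf ω v₁ x₂ x₅ * tf ω v₁ x₃ x₄ ≠ 0) :
    ∃ y₂ y₃ y₄ y₅ : V, tf ω v₁ y₂ y₃ = 1 ∧ tf ω v₁ y₄ y₅ = 1 ∧
      tf ω v₁ y₂ y₄ = 0 ∧ tf ω v₁ y₂ y₅ = 0 ∧ tf ω v₁ y₃ y₄ = 0 ∧ tf ω v₁ y₃ y₅ = 0 := by
  have s32 : tf ω v₁ x₃ x₂ = - tf ω v₁ x₂ x₃ := tf_swap12 v₁ x₂ x₃
  have s42 : tf ω v₁ x₄ x₂ = - tf ω v₁ x₂ x₄ := tf_swap12 v₁ x₂ x₄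
  have s43 : tf ω v₁ x₄ x₃ = - tf ω v₁ x₃ x₄ := tf_swap12 v₁ x₃ x₄
  have s52 : tf ω v₁ x₅ x₂ = - tf ω v₁ x₂ x₅ := tf_swap12 v₁ x₂ x₅
  have s53 : tf ω v₁ x₅ x₃ = - tf ω v₁ x₃ x₅ := tf_swap12 v₁ x₃ x₅
  set b := tf ω v₁ x₂ x₃ with hbdef
  set y₄ : V := x₄ + (b⁻¹ * tf ω v₁ x₃ x₄) • x₂ + (-(b⁻¹ * tf ω v₁ x₂ x₄)) • x₃ with hy₄
  set y₅₀ : V := x₅ + (b⁻¹ * tf ω v₁ x₃ x₅) • x₂ + (-(b⁻¹ * tf ω v₁ x₂ x₅)) • x₃ with hy₅₀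
  have h24 : tf ω v₁ x₂ y₄ = 0 := by
    rw [hy₄]; simp only [tf_add₂, tf_smul₂, tf_self12]
    field_simp
    ring
  have h34 : tf ω v₁ x₃ y₄ = 0 := by
    rw [hy₄]; simp only [tf_add₂, tf_smul₂, tf_self12, s32]
    field_simp
    ring
  have h25 : tf ω v₁ x₂ y₅₀ = 0 := by
    rw [hy₅₀]; simp only [tf_add₂, tf_smul₂, tf_self12]
    field_simp
    ring
  have h35 : tf ω v₁ x₃ y₅₀ = 0 := by
    rw [hy₅₀]; simp only [tf_add₂, tf_smul₂, tf_self12, s32]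
    field_simp
    ring
  set c := tf ω v₁ y₄ y₅₀ with hcdef
  have hc : b * c = tf ω v₁ x₂ x₃ * tf ω v₁ x₄ x₅ - tf ω v₁ x₂ x₄ * tf ω v₁ x₃ x₅
      + tf ω v₁ x₂ x₅ * tf ω v₁ x₃ x₄ := by
    rw [hcdef, hy₄]
    simp only [tf_add₁, tf_smul₁, h25, h35]
    rw [hy₅₀]
    simp only [tf_add₂, tf_smul₂, tf_self12, s32, s42, s43, s52, s53]
    field_simp; ring
  have hc0 : c ≠ 0 := by
    intro h; rw [h, mul_zero] at hc; exact hPf hc.symm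
  refine ⟨x₂, b⁻¹ • x₃, y₄, c⁻¹ • y₅₀, ?_, ?_, ?_, ?_, ?_, ?_⟩
  · rw [tf_smul₂, ← hbdef, inv_mul_cancel₀ hb]
  · rw [tf_smul₂, ← hcdef, inv_mul_cancel₀ hc0]
  · exact h24
  · rw [tf_smul₂, h25, mul_zero]
  · rw [tf_smul₁, h34, mul_zero]
  · rw [tf_smul₁, tf_smul₂, h35]; ring

/-- Step B: a contraction can be brought to standard symplectic shape. -/
lemma stepB (hrk : ∀ v : V, (∀ u w : V, ω ![v, u, w] = 0) → v = 0) :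
    ∃ v₁ y₂ y₃ y₄ y₅ : V, tf ω v₁ y₂ y₃ = 1 ∧ tf ω v₁ y₄ y₅ = 1 ∧
      tf ω v₁ y₂ y₄ = 0 ∧ tf ω v₁ y₂ y₅ = 0 ∧ tf ω v₁ y₃ y₄ = 0 ∧ tf ω v₁ y₃ y₅ = 0 := by
  obtain ⟨v₁, x₂, x₃, x₄, x₅, hPf⟩ := stepA hrk
  by_cases h23 : tf ω v₁ x₂ x₃ ≠ 0
  · exact ⟨v₁, stepB' v₁ x₂ x₃ x₄ x₅ h23 hPf⟩
  by_cases h24 : tf ω v₁ x₂ x₄ ≠ 0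
  · refine ⟨v₁, stepB' v₁ x₂ x₄ x₃ x₅ h24 ?_⟩
    intro h0
    apply hPf
    have s43 : tf ω v₁ x₄ x₃ = - tf ω v₁ x₃ x₄ := tf_swap12 v₁ x₃ x₄
    rw [s43] at h0
    linear_combination -h0
  by_cases h25 : tf ω v₁ x₂ x₅ ≠ 0
  · refine ⟨v₁, stepB' v₁ x₂ x₅ x₃ x₄ h25 ?_⟩
    intro h0
    apply hPf
    have s54 : tf ω v₁ x₅ x₄ = - tf ω v₁ x₄ x₅ := tf_swap12 v₁ x₄ x₅
    have s53 : tf ω v₁ x₅ x₃ = - tf ω v₁ x₃ x₅ := tf_swap12 v₁ x₃ x₅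
    rw [s54, s53] at h0
    linear_combination h0
  push_neg at h23 h24 h25
  exact absurd (by rw [h23, h24, h25]; ring) hPf

/-- Step C: build the normal-form basis vectors. -/
lemma stepC (v₁ y₂ y₃ y₄ y₅ : V)
    (H23 : tf ω v₁ y₂ y₃ = 1) (H45 : tf ω v₁ y₄ y₅ = 1)
    (H24 : tf ω v₁ y₂ y₄ = 0) (H25 : tf ω v₁ y₂ y₅ = 0)
    (H34 : tf ω v₁ y₃ y₄ = 0) (H35 : tf ω v₁ y₃ y₅ = 0) :
    ∃ u : Fin 5 → V,
      tf ω (u 0) (u 1) (u 2) = 1 ∧ tf ω (u 0) (u 3) (u 4) = 1 ∧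
      tf ω (u 0) (u 1) (u 3) = 0 ∧ tf ω (u 0) (u 1) (u 4) = 0 ∧
      tf ω (u 0) (u 2) (u 3) = 0 ∧ tf ω (u 0) (u 2) (u 4) = 0 ∧
      tf ω (u 1) (u 2) (u 3) = 0 ∧ tf ω (u 1) (u 2) (u 4) = 0 ∧
      tf ω (u 1) (u 3) (u 4) = 0 ∧ tf ω (u 2) (u 3) (u 4) = 0 := by
  have p23 : tf ω y₂ y₃ v₁ = 1 := (tf_cyc v₁ y₂ y₃).trans H23
  have p24 : tf ω y₂ y₄ v₁ = 0 := (tf_cyc v₁ y₂ y₄).trans H24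
  have p25 : tf ω y₂ y₅ v₁ = 0 := (tf_cyc v₁ y₂ y₅).trans H25
  have p34 : tf ω y₃ y₄ v₁ = 0 := (tf_cyc v₁ y₃ y₄).trans H34
  have p35 : tf ω y₃ y₅ v₁ = 0 := (tf_cyc v₁ y₃ y₅).trans H35
  have p45 : tf ω y₄ y₅ v₁ = 1 := (tf_cyc v₁ y₄ y₅).trans H45
  have q23 : tf ω y₂ v₁ y₃ = -1 := by rw [tf_swap01 (ω := ω) v₁ y₂ y₃, H23]
  have q24 : tf ω y₂ v₁ y₄ = 0 := by rw [tf_swap01 (ω := ω) v₁ y₂ y₄, H24]; ring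
  have q25 : tf ω y₂ v₁ y₅ = 0 := by rw [tf_swap01 (ω := ω) v₁ y₂ y₅, H25]; ring
  have q34 : tf ω y₃ v₁ y₄ = 0 := by rw [tf_swap01 (ω := ω) v₁ y₃ y₄, H34]; ring
  have q35 : tf ω y₃ v₁ y₅ = 0 := by rw [tf_swap01 (ω := ω) v₁ y₃ y₅, H35]; ring
  have q45 : tf ω y₄ v₁ y₅ = -1 := by rw [tf_swap01 (ω := ω) v₁ y₄ y₅, H45]
  refine ⟨![v₁, y₂ + (-(tf ω y₂ y₄ y₅)) • v₁, y₃ + (-(tf ω y₃ y₄ y₅)) • v₁,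
    y₄ + (-(tf ω y₂ y₃ y₄)) • v₁, y₅ + (-(tf ω y₂ y₃ y₅)) • v₁],
    ?_, ?_, ?_, ?_, ?_, ?_, ?_, ?_, ?_, ?_⟩ <;>
  · show tf ω _ _ _ = _
    simp only [Matrix.cons_val_zero, Matrix.cons_val_one, Matrix.head_cons,
      Matrix.cons_val_two, Matrix.tail_cons, Matrix.cons_val_three, Matrix.cons_val_four,
      tf_add₀, tf_add₁, tf_add₂, tf_smul₀, tf_smul₁, tf_smul₂,
      tf_self01, tf_self12, tf_self02,
      H23, H45, H24, H25, H34, H35, p23, p24, p25, p34, p35, p45,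
      q23, q24, q25, q34, q35, q45]
    ring

/-- The coordinate-projection linear map used for `eDet`. -/
def eProj (i j k : Fin 5) : V →ₗ[ℂ] (Fin 3 → ℂ) :=
  LinearMap.pi fun r => LinearMap.proj (![i, j, k] r)

/-- `eDet i j k` as an alternating map. -/
def eAlt (i j k : Fin 5) : AlternatingMap ℂ V ℂ (Fin 3) :=
  (Matrix.detRowAlternating : AlternatingMap ℂ (Fin 3 → ℂ) ℂ (Fin 3)).compLinearMap
    (eProj i j k)

lemma eAlt_apply (i j k : Fin 5) (a b c : V) :
    eAlt i j k ![a, b, c] = eDet i j k a b c := by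
  have h : (fun r => eProj i j k (![a, b, c] r)) =
      ![![a i, a j, a k], ![b i, b j, b k], ![c i, c j, c k]] := by
    funext r s
    fin_cases r <;> fin_cases s <;> rfl
  simp only [eAlt, AlternatingMap.compLinearMap_apply]
  rw [h]
  show Matrix.det !![a i, a j, a k; b i, b j, b k; c i, c j, c k] = _
  rw [eDet, Matrix.det_fin_three, Matrix.det_fin_three]
  simp [Matrix.cons_val_zero, Matrix.cons_val_one, Matrix.head_cons]
  ring

end ThreeFormAux


open ThreeFormAux in
/-- Every three-form of maximal rank in five variables is `GL₅`-equivalent to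
`e^{123} + e^{145}`. -/
theorem rankFive_threeForm_normal_form
    (ω : AlternatingMap ℂ (Fin 5 → ℂ) ℂ (Fin 3))
    (hrk : ∀ v : Fin 5 → ℂ, (∀ u w : Fin 5 → ℂ, ω ![v, u, w] = 0) → v = 0) :
    ∃ g : (Fin 5 → ℂ) ≃ₗ[ℂ] (Fin 5 → ℂ), ∀ u v w : Fin 5 → ℂ,
      ω ![g u, g v, g w] = eDet 0 1 2 u v w + eDet 0 3 4 u v w := by
  obtain ⟨v₁, y₂, y₃, y₄, y₅, H23, H45, H24, H25, H34, H35⟩ := stepB (ω := ω) hrk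
  obtain ⟨u, G1, G2, G3, G4, G5, G6, G7, G8, G9, G10⟩ :=
    stepC (ω := ω) v₁ y₂ y₃ y₄ y₅ H23 H45 H24 H25 H34 H35
  set e := Pi.basisFun ℂ (Fin 5) with he
  set g₀ : (Fin 5 → ℂ) →ₗ[ℂ] (Fin 5 → ℂ) := e.constr ℂ u with hg₀
  have hge : ∀ i : Fin 5, g₀ (e i) = u i := fun i => e.constr_basis ℂ u i
  -- derived Gram values
  have d1 : tf ω (u 3) (u 1) (u 2) = 0 := (tf_cyc (u 3) (u 1) (u 2)).symm.trans G7
  have d2 : tf ω (u 4) (u 1) (u 2) = 0 := (tf_cyc (u 4) (u 1) (u 2)).symm.trans G8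
  have d3 : tf ω (u 1) (u 0) (u 2) = -1 := by
    rw [tf_swap01 (ω := ω) (u 0) (u 1) (u 2), G1]
  have d4 : tf ω (u 3) (u 0) (u 2) = 0 := (tf_cyc (u 3) (u 0) (u 2)).symm.trans G5
  have d5 : tf ω (u 4) (u 0) (u 2) = 0 := (tf_cyc (u 4) (u 0) (u 2)).symm.trans G6
  have d6 : tf ω (u 2) (u 0) (u 1) = 1 := (tf_cyc (u 2) (u 0) (u 1)).symm.trans G1
  have d7 : tf ω (u 3) (u 0) (u 1) = 0 := (tf_cyc (u 3) (u 0) (u 1)).symm.trans G3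
  have d8 : tf ω (u 4) (u 0) (u 1) = 0 := (tf_cyc (u 4) (u 0) (u 1)).symm.trans G4
  have d9 : tf ω (u 1) (u 0) (u 4) = 0 := by
    rw [tf_swap01 (ω := ω) (u 0) (u 1) (u 4), G4]; ring
  have d10 : tf ω (u 2) (u 0) (u 4) = 0 := by
    rw [tf_swap01 (ω := ω) (u 0) (u 2) (u 4), G6]; ring
  have d11 : tf ω (u 3) (u 0) (u 4) = -1 := by
    rw [(tf_cyc (ω := ω) (u 3) (u 0) (u 4)).symm, tf_swap12 (ω := ω) (u 0) (u 3) (u 4), G2]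
  have d12 : tf ω (u 1) (u 0) (u 3) = 0 := by
    rw [tf_swap01 (ω := ω) (u 0) (u 1) (u 3), G3]; ring
  have d13 : tf ω (u 2) (u 0) (u 3) = 0 := by
    rw [tf_swap01 (ω := ω) (u 0) (u 2) (u 3), G5]; ring
  have d14 : tf ω (u 4) (u 0) (u 3) = 1 := (tf_cyc (u 4) (u 0) (u 3)).symm.trans G2
  -- injectivity
  have hinj0 : ∀ c : Fin 5 → ℂ, g₀ c = 0 → c = 0 := by
    intro c hc
    have hs : c 0 • u 0 + c 1 • u 1 + c 2 • u 2 + c 3 • u 3 + c 4 • u 4 = 0 := by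
      have h := hc
      rw [hg₀, Module.Basis.constr_apply_fintype] at h
      simpa [Fin.sum_univ_five, he, Module.Basis.equivFun_apply] using h
    have e0 : c 0 = 0 := by
      have h := congrArg (fun z => tf ω z (u 1) (u 2)) hs
      simp only [tf_add₀, tf_smul₀, tf_zero₀, G1, d1, d2, tf_self01, tf_self02] at h
      linear_combination h
    have e1 : c 1 = 0 := by
      have h := congrArg (fun z => tf ω z (u 0) (u 2)) hs
      simp only [tf_add₀, tf_smul₀, tf_zero₀, d3, d4, d5, tf_self01, tf_self02] at h
      linear_combination -h
    have e2 : c 2 = 0 := by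
      have h := congrArg (fun z => tf ω z (u 0) (u 1)) hs
      simp only [tf_add₀, tf_smul₀, tf_zero₀, d6, d7, d8, tf_self01, tf_self02] at h
      linear_combination h
    have e3 : c 3 = 0 := by
      have h := congrArg (fun z => tf ω z (u 0) (u 4)) hs
      simp only [tf_add₀, tf_smul₀, tf_zero₀, d9, d10, d11, tf_self01, tf_self02] at h
      linear_combination -h
    have e4 : c 4 = 0 := by
      have h := congrArg (fun z => tf ω z (u 0) (u 3)) hs
      simp only [tf_add₀, tf_smul₀, tf_zero₀, d12, d13, d14, tf_self01, tf_self02] at h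
      linear_combination h
    funext i
    simp only [Pi.zero_apply]
    fin_cases i
    exacts [e0, e1, e2, e3, e4]
  have hbij : Function.Bijective g₀ :=
    ⟨(injective_iff_map_eq_zero g₀).mpr hinj0,
      LinearMap.injective_iff_surjective.mp ((injective_iff_map_eq_zero g₀).mpr hinj0)⟩
  -- evaluation lemmas
  have hbv : ∀ i : Fin 5, (e i : V) = Pi.single i 1 := by
    intro i; rw [he]; simp
  have LHSl : ∀ a b c : Fin 5,
      (ω.compLinearMap g₀) ![e a, e b, e c] = tf ω (u a) (u b) (u c) := by
    intro a b c
    rw [AlternatingMap.compLinearMap_apply]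
    have h : (fun i => g₀ (![e a, e b, e c] i)) = ![u a, u b, u c] := by
      funext r; fin_cases r <;> simp [hge]
    rw [h]; rfl
  have RHSl : ∀ a b c : Fin 5, ((eAlt 0 1 2 + eAlt 0 3 4) ![e a, e b, e c] : ℂ)
      = eDet 0 1 2 (e a) (e b) (e c) + eDet 0 3 4 (e a) (e b) (e c) := by
    intro a b c
    rw [AlternatingMap.add_apply, eAlt_apply, eAlt_apply]
  have henum : ∀ i j k : Fin 5, i < j → j < k →
      (i = 0 ∧ j = 1 ∧ k = 2) ∨ (i = 0 ∧ j = 1 ∧ k = 3) ∨ (i = 0 ∧ j = 1 ∧ k = 4) ∨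
      (i = 0 ∧ j = 2 ∧ k = 3) ∨ (i = 0 ∧ j = 2 ∧ k = 4) ∨ (i = 0 ∧ j = 3 ∧ k = 4) ∨
      (i = 1 ∧ j = 2 ∧ k = 3) ∨ (i = 1 ∧ j = 2 ∧ k = 4) ∨ (i = 1 ∧ j = 3 ∧ k = 4) ∨
      (i = 2 ∧ j = 3 ∧ k = 4) := by decide
  have hkey : ∀ i j k : Fin 5, i < j → j < k →
      tf ω (u i) (u j) (u k)
        = eDet 0 1 2 (e i) (e j) (e k) + eDet 0 3 4 (e i) (e j) (e k) := by
    intro i j k hij hjk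
    rcases henum i j k hij hjk with ⟨rfl,rfl,rfl⟩|⟨rfl,rfl,rfl⟩|⟨rfl,rfl,rfl⟩|⟨rfl,rfl,rfl⟩|
      ⟨rfl,rfl,rfl⟩|⟨rfl,rfl,rfl⟩|⟨rfl,rfl,rfl⟩|⟨rfl,rfl,rfl⟩|⟨rfl,rfl,rfl⟩|⟨rfl,rfl,rfl⟩ <;>
      simp [hbv, eDet, Matrix.det_fin_three, Pi.single_apply, Matrix.vecHead, Matrix.vecTail,
        G1, G2, G3, G4, G5, G6, G7, G8, G9, G10]
  have hFG : ω.compLinearMap g₀ = eAlt 0 1 2 + eAlt 0 3 4 := by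
    apply Module.Basis.ext_alternating e
    intro v hv
    set σ := Tuple.sort v with hσ
    have hsm : StrictMono (v ∘ σ) :=
      (Tuple.monotone_sort v).strictMono_of_injective (hv.comp σ.injective)
    have h01 : (v ∘ σ) 0 < (v ∘ σ) 1 := hsm (by decide)
    have h12 : (v ∘ σ) 1 < (v ∘ σ) 2 := hsm (by decide)
    have hcomp : (fun i => e (v i)) = ((fun i => e ((v ∘ σ) i)) ∘ ⇑σ⁻¹) := by
      funext i; simp [Function.comp]
    rw [hcomp, AlternatingMap.map_perm, AlternatingMap.map_perm]
    congr 1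
    have hfn : (fun i => e ((v ∘ σ) i)) = ![e ((v ∘ σ) 0), e ((v ∘ σ) 1), e ((v ∘ σ) 2)] := by
      funext r; fin_cases r <;> rfl
    rw [hfn, LHSl, RHSl]
    exact hkey _ _ _ h01 h12
  refine ⟨LinearEquiv.ofBijective g₀ hbij, ?_⟩
  intro a b c
  have h := DFunLike.congr_fun hFG ![a, b, c]
  rw [AlternatingMap.compLinearMap_apply] at h
  have h2 : (fun i => g₀ (![a, b, c] i))
      = ![(LinearEquiv.ofBijective g₀ hbij) a, (LinearEquiv.ofBijective g₀ hbij) b,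
          (LinearEquiv.ofBijective g₀ hbij) c] := by
    funext r; fin_cases r <;> rfl
  rw [h2] at h
  rw [AlternatingMap.add_apply, eAlt_apply, eAlt_apply] at h
  exact h
end
end

section
/- Hurwitz–Jacobson theorem: let K be a field of characteristic ≠ 2 and let A be a composition algebra over K. Then the dimension of A over K is 1, 2, 4 or 8: Module.finrank K A ∈ ({1, 2, 4, 8} : Set ℕ). -/
noncomputable section

namespace HJaux
set_option linter.unusedSectionVars false

open QuadraticMap Module

variable {K : Type*} [Field K] {A : Type*} [NonAssocRing A] [Module K A]
  [IsScalarTower K A A] [SMulCommClass K A A]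

/-- Conjugation associated to a quadratic form. -/
def cj (Q : QuadraticForm K A) (x : A) : A := polar Q x 1 • (1 : A) - x

variable {Q : QuadraticForm K A}

section basic

variable (hmul : ∀ x y : A, Q (x * y) = Q x * Q y)
include hmul

lemma bmull (x z y : A) : polar Q (x * y) (z * y) = polar Q x z * Q y := by
  have h := hmul (x + z) y
  have h1 := hmul x y
  have h2 := hmul z y
  rw [add_mul] at h
  simp only [polar]
  linear_combination h - h1 - h2

lemma bmulr (x y z : A) : polar Q (x * y) (x * z) = Q x * polar Q y z := by
  have h := hmul x (y + z)
  have h1 := hmul x y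
  have h2 := hmul x z
  rw [mul_add] at h
  simp only [polar]
  linear_combination h - h1 - h2

lemma exchange (x u z w : A) :
    polar Q (x * u) (z * w) + polar Q (x * w) (z * u) = polar Q x z * polar Q u w := by
  have h := bmull hmul x z (u + w)
  have h1 := bmull hmul x z u
  have h2 := bmull hmul x z w
  have hQ : Q (u + w) = Q u + Q w + polar Q u w := by simp only [polar]; ring
  rw [mul_add, mul_add, polar_add_left, polar_add_right, polar_add_right, hQ] at h
  linear_combination h - h1 - h2

lemma radj (x y z : A) : polar Q (x * y) z = polar Q y (cj Q x * z) := by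
  have hex := exchange hmul 1 y x z
  rw [one_mul, one_mul] at hex
  have hc1 : polar Q (x * y) z = polar Q z (x * y) := polar_comm _ _ _
  have hc2 : polar Q 1 x = polar Q x 1 := polar_comm _ _ _
  simp only [cj, sub_mul, smul_mul_assoc, one_mul, polar_sub_right, polar_smul_right,
    smul_eq_mul]
  linear_combination hc1 + hex + polar Q y z * hc2

lemma ladj (x y z : A) : polar Q (x * y) z = polar Q x (z * cj Q y) := by
  have hex := exchange hmul x y z 1
  rw [mul_one, mul_one] at hex
  have hc2 : polar Q y 1 = polar Q 1 y := polar_comm _ _ _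
  simp only [cj, mul_sub, mul_smul_comm, mul_one, polar_sub_right, polar_smul_right,
    smul_eq_mul]
  linear_combination hex

end basic

section nondeg

variable (hmul : ∀ x y : A, Q (x * y) = Q x * Q y)
variable (hnd : ∀ x : A, (∀ y : A, polar Q x y = 0) → x = 0)
include hmul hnd

lemma QI [Nontrivial A] : Q 1 = 1 := by
  obtain ⟨x, hx⟩ := exists_ne (0 : A)
  have hxy : ∃ y, polar Q x y ≠ 0 := by
    by_contra hc
    push_neg at hc
    exact hx (hnd x hc)
  obtain ⟨y, hy⟩ := hxy
  have h := bmull hmul x y 1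
  rw [mul_one, mul_one] at h
  have : polar Q x y * Q 1 = polar Q x y * 1 := by rw [mul_one]; linear_combination -h
  exact mul_left_cancel₀ hy this

lemma b11 [Nontrivial A] : polar Q 1 1 = 2 := by
  have := polar_self Q (1 : A)
  rw [QI hmul hnd] at this
  simpa using this

variable [Nontrivial A]

lemma cj1 : polar Q (cj Q x) 1 = polar Q x 1 := by
  simp only [cj, polar_sub_left, polar_smul_left, smul_eq_mul, b11 hmul hnd]
  ring

lemma cjcj (x : A) : cj Q (cj Q x) = x := by
  rw [cj, cj1 hmul hnd, cj]
  abel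

lemma linv (x y : A) : cj Q x * (x * y) = Q x • y := by
  have key : ∀ z, polar Q (cj Q x * (x * y) - Q x • y) z = 0 := by
    intro z
    rw [polar_sub_left, polar_smul_left, radj hmul (cj Q x) (x * y) z, cjcj hmul hnd,
      bmulr hmul, smul_eq_mul]
    ring
  have := hnd _ key
  rwa [sub_eq_zero] at this

lemma rinv (x y : A) : (y * x) * cj Q x = Q x • y := by
  have key : ∀ z, polar Q ((y * x) * cj Q x - Q x • y) z = 0 := by
    intro z
    rw [polar_sub_left, polar_smul_left, ladj hmul (y * x) (cj Q x) z, cjcj hmul hnd,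
      bmull hmul, smul_eq_mul]
    rw [polar_comm (⇑Q) y z]
    ring
  have := hnd _ key
  rwa [sub_eq_zero] at this

lemma cj_add (x v : A) : cj Q (x + v) = cj Q x + cj Q v := by
  simp only [cj, polar_add_left, add_smul]
  abel

lemma cj_neg (x : A) : cj Q (-x) = -(cj Q x) := by
  simp only [cj, polar_neg_left, neg_smul]
  abel

lemma llin (x v w : A) :
    cj Q x * (v * w) + cj Q v * (x * w) = polar Q x v • w := by
  have h := linv hmul hnd (x + v) w
  have hQ : Q (x + v) = Q x + Q v + polar Q x v := by simp only [polar]; ring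
  rw [cj_add hmul hnd, add_mul, add_mul, mul_add, mul_add, linv hmul hnd x w,
    linv hmul hnd v w, hQ, add_smul, add_smul] at h
  linear_combination (norm := module) h

lemma rlin (x v w : A) :
    (w * v) * cj Q x + (w * x) * cj Q v = polar Q x v • w := by
  have h := rinv hmul hnd (x + v) w
  have hQ : Q (x + v) = Q x + Q v + polar Q x v := by simp only [polar]; ring
  rw [cj_add hmul hnd] at h
  simp only [add_mul, mul_add] at h
  rw [rinv hmul hnd x w, rinv hmul hnd v w, hQ, add_smul, add_smul] at h
  linear_combination (norm := module) h

lemma bmul1 (x y : A) :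
    polar Q (x * y) 1 = polar Q x 1 * polar Q y 1 - polar Q x y := by
  have hex := exchange hmul x y 1 1
  rw [one_mul, mul_one, one_mul] at hex
  linear_combination hex

lemma cjmul (x y : A) : cj Q (x * y) = cj Q y * cj Q x := by
  have key := llin hmul hnd x y 1
  rw [mul_one, mul_one] at key
  simp only [cj, sub_mul, mul_sub, smul_mul_assoc, mul_smul_comm, smul_sub, one_mul,
    mul_one, smul_smul] at key ⊢
  rw [bmul1 hmul hnd x y]
  linear_combination (norm := module) key

lemma Qcj (x : A) : Q (cj Q x) = Q x := by
  have h0 : cj Q x + x = polar Q x 1 • 1 := by simp [cj]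
  have h1 : Q (cj Q x + x) = Q (cj Q x) + Q x + polar Q (cj Q x) x := by
    simp only [polar]; ring
  have h2 : polar Q (cj Q x) x = polar Q x 1 * polar Q 1 x - 2 • Q x := by
    simp only [cj, polar_sub_left, polar_smul_left, polar_self, smul_eq_mul]
  have h3 : Q (polar Q x 1 • (1 : A)) = polar Q x 1 * polar Q x 1 := by
    rw [QuadraticMap.map_smul, QI hmul hnd, smul_eq_mul, mul_one]
  have h4 : polar Q 1 x = polar Q x 1 := polar_comm _ _ _
  rw [h0, h3] at h1
  rw [h4] at h2
  have h5 : (2 : ℕ) • Q x = 2 * Q x := by simp [nsmul_eq_mul]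
  rw [h5] at h2
  linear_combination -h1 - h2
end nondeg


section ortho

variable [Nontrivial A]
variable (hmul : ∀ x y : A, Q (x * y) = Q x * Q y)
variable (hnd : ∀ x : A, (∀ y : A, polar Q x y = 0) → x = 0)
variable {a : A} (ha1 : polar Q a 1 = 0)
include hmul hnd ha1

lemma cja : cj Q a = -a := by
  simp [cj, ha1]

omit hmul hnd in
lemma cj_orth {x : A} (hxa : polar Q x a = 0) : polar Q (cj Q x) a = 0 := by
  rw [cj, polar_sub_left, polar_smul_left, polar_comm (⇑Q) 1 a, ha1, hxa, smul_zero,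
    sub_zero]

lemma e1 {x : A} (hxa : polar Q x a = 0) (z : A) : cj Q x * (a * z) = a * (x * z) := by
  have h := llin hmul hnd x a z
  rw [cja hmul hnd ha1, hxa, zero_smul, neg_mul] at h
  linear_combination (norm := module) h

lemma e2 {x : A} (hxa : polar Q x a = 0) (z : A) : (z * a) * cj Q x = (z * x) * a := by
  have h := rlin hmul hnd x a z
  rw [cja hmul hnd ha1, hxa, zero_smul, mul_neg] at h
  linear_combination (norm := module) h

lemma axc {x : A} (hxa : polar Q x a = 0) : a * cj Q x = x * a := by
  have h := e2 hmul hnd ha1 hxa 1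
  rwa [one_mul, one_mul] at h

lemma axc' {x : A} (hxa : polar Q x a = 0) : a * x = cj Q x * a := by
  have h := axc hmul hnd ha1 (cj_orth ha1 hxa)
  rwa [cjcj hmul hnd] at h

lemma C2 {y : A} (hya : polar Q y a = 0) (z : A) : (z * a) * y = (z * cj Q y) * a := by
  have h := e2 hmul hnd ha1 (cj_orth ha1 hya) z
  rwa [cjcj hmul hnd] at h

lemma C1 {x y : A} (hxa : polar Q x a = 0) (hya : polar Q y a = 0)
    (hyxa : polar Q (y * x) a = 0) : x * (y * a) = (y * x) * a := by
  have e1' := e1 hmul hnd ha1 (cj_orth ha1 hxa) (cj Q y)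
  rw [cjcj hmul hnd] at e1'
  calc x * (y * a) = x * (a * cj Q y) := by rw [axc hmul hnd ha1 hya]
    _ = a * (cj Q x * cj Q y) := e1'
    _ = a * cj Q (y * x) := by rw [cjmul hmul hnd]
    _ = (y * x) * a := axc hmul hnd ha1 hyxa

lemma aaw (w : A) : a * (a * w) = -(Q a) • w := by
  have h := linv hmul hnd a w
  rw [cja hmul hnd ha1, neg_mul] at h
  rw [neg_smul]
  linear_combination (norm := module) -h

lemma C3 {x y : A} (hxa : polar Q x a = 0) (hya : polar Q y a = 0)
    (hxya : polar Q (x * y) a = 0) :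
    (x * a) * (y * a) = -(Q a) • (cj Q y * x) := by
  have hcjxa : cj Q (x * a) = -(x * a) := by
    rw [cjmul hmul hnd x a, cja hmul hnd ha1, neg_mul, axc hmul hnd ha1 hxa]
  have h := llin hmul hnd (-(x * a)) a (cj Q y)
  rw [cj_neg hmul hnd, hcjxa, neg_neg, cja hmul hnd ha1, axc hmul hnd ha1 hya,
    polar_neg_left] at h
  rw [neg_mul (x * a) (cj Q y), neg_mul_neg] at h
  rw [C2 hmul hnd ha1 (cj_orth ha1 hya) x, cjcj hmul hnd] at h
  have haxy : a * ((x * y) * a) = -(Q a) • cj Q (x * y) := by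
    rw [← axc hmul hnd ha1 hxya, aaw hmul hnd ha1]
  rw [haxy, cjmul hmul hnd x y] at h
  have hb : polar Q (x * a) a = polar Q x 1 * Q a := by
    have := bmull hmul x 1 a
    rwa [one_mul] at this
  rw [hb] at h
  have hexp : cj Q x = polar Q x 1 • (1 : A) - x := rfl
  rw [hexp, mul_sub, mul_smul_comm, mul_one] at h
  rw [neg_smul]
  linear_combination (norm := module) h

end ortho

section subalg

variable [Nontrivial A] [FiniteDimensional K A]
variable (hmul : ∀ x y : A, Q (x * y) = Q x * Q y)
variable (hnd : ∀ x : A, (∀ y : A, polar Q x y = 0) → x = 0)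
variable (V : Submodule K A)

include hnd in
lemma exists_a (hndV : ∀ x ∈ V, (∀ y ∈ V, polar Q x y = 0) → x = 0)
    (hVtop : V ≠ ⊤) :
    ∃ a : A, (∀ v ∈ V, polar Q a v = 0) ∧ Q a ≠ 0 := by
  classical
  set φ : A →ₗ[K] Module.Dual K V := (polarBilin Q).compl₂ V.subtype with hφ
  have hφ_apply : ∀ z : A, ∀ v : V, φ z v = polar Q z v := fun z v => rfl
  set ψ : V →ₗ[K] Module.Dual K V := φ.comp V.subtype with hψ
  have hψinj : Function.Injective ψ := by
    rw [← LinearMap.ker_eq_bot, LinearMap.ker_eq_bot']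
    intro v hv
    have : (v : A) = 0 := by
      apply hndV v v.2
      intro y hy
      have := congrFun (congrArg (fun f => f.toFun) hv) ⟨y, hy⟩
      simp at this; exact this
    exact Subtype.ext this
  have hψsurj : Function.Surjective ψ := by
    have heq : finrank K V = finrank K (Module.Dual K V) :=
      (Subspace.dual_finrank_eq).symm
    exact (LinearMap.injective_iff_surjective_of_finrank_eq_finrank heq).mp hψinj
  by_contra hcon
  push_neg at hcon
  have hker : ∀ z : A, φ z = 0 → z = 0 := by
    intro z hz
    have hzV : ∀ v ∈ V, polar Q z v = 0 := by
      intro v hv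
      have := congrFun (congrArg (fun f => f.toFun) hz) ⟨v, hv⟩
      simpa [hφ_apply] using this
    have hQker : ∀ w : A, φ w = 0 → Q w = 0 := by
      intro w hw
      apply hcon
      intro v hv
      have := congrFun (congrArg (fun f => f.toFun) hw) ⟨v, hv⟩
      simpa [hφ_apply] using this
    apply hnd
    intro w
    obtain ⟨v, hv⟩ := hψsurj (φ w)
    have hwv : φ (w - (v : A)) = 0 := by
      rw [_root_.map_sub, ← hv]
      simp [hψ]
    have h1 : polar Q z (v : A) = 0 := hzV v v.2
    have h2 : polar Q z (w - (v : A)) = 0 := by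
      have ha := hQker z hz
      have hb := hQker _ hwv
      have hc := hQker (z + (w - (v : A))) (by rw [_root_.map_add, hz, hwv, add_zero])
      simp only [polar, ha, hb, hc]
      ring
    have : w = (v : A) + (w - (v : A)) := by abel
    rw [this, polar_add_right, h1, h2, add_zero]
  have hφinj : Function.Injective φ := by
    rw [← LinearMap.ker_eq_bot, LinearMap.ker_eq_bot']
    exact hker
  have hle : finrank K A ≤ finrank K V := by
    calc finrank K A ≤ finrank K (Module.Dual K V) :=
          LinearMap.finrank_le_finrank_of_injective hφinj
      _ = finrank K V := Subspace.dual_finrank_eq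
  exact hVtop (Submodule.eq_top_of_finrank_eq (le_antisymm (Submodule.finrank_le V) hle))

include hmul hnd in
lemma proper_assoc (h1V : (1 : A) ∈ V) (hclV : ∀ x ∈ V, ∀ y ∈ V, x * y ∈ V)
    (hndV : ∀ x ∈ V, (∀ y ∈ V, polar Q x y = 0) → x = 0) (hVtop : V ≠ ⊤) :
    ∀ p ∈ V, ∀ q ∈ V, ∀ r ∈ V, p * q * r = p * (q * r) := by
  obtain ⟨a, haV, hQa⟩ := exists_a hnd V hndV hVtop
  have ha1 : polar Q a 1 = 0 := haV 1 h1V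
  have hcjV : ∀ x ∈ V, cj Q x ∈ V := fun x hx =>
    V.sub_mem (V.smul_mem _ h1V) hx
  have hxa : ∀ x ∈ V, polar Q x a = 0 := fun x hx => by
    rw [polar_comm]; exact haV x hx
  have horth : ∀ y ∈ V, ∀ v ∈ V, polar Q (y * a) v = 0 := by
    intro y hy v hv
    rw [radj hmul y a v]
    exact haV _ (hclV _ (hcjV y hy) v hv)
  have hmid : ∀ u ∈ V, ∀ v ∈ V, ∀ y ∈ V,
      cj Q v * (y * cj Q u) = (cj Q v * y) * cj Q u := by
    intro u hu v hv y hy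
    have key : ∀ x ∈ V, polar Q (v * x) (y * cj Q u) = polar Q (x * u) (cj Q v * y) := by
      intro x hx
      have step1 : polar Q ((v * x) * a) ((y * cj Q u) * a)
          = polar Q (v * x) (y * cj Q u) * Q a := bmull hmul _ _ a
      have step2 : (v * x) * a = x * (v * a) :=
        (C1 hmul hnd ha1 (hxa x hx) (hxa v hv) (hxa _ (hclV v hv x hx))).symm
      have step3 : (y * cj Q u) * a = (y * a) * u :=
        (C2 hmul hnd ha1 (hxa u hu) y).symm
      have step4 := exchange hmul x (v * a) (y * a) u
      have h5 : polar Q x (y * a) = 0 := by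
        rw [polar_comm]; exact horth y hy x hx
      have h6 : (y * a) * (v * a) = -(Q a) • (cj Q v * y) :=
        C3 hmul hnd ha1 (hxa y hy) (hxa v hv) (hxa _ (hclV y hy v hv))
      rw [h6, h5, zero_mul, polar_smul_right, smul_eq_mul] at step4
      rw [step2, step3] at step1
      have : polar Q (v * x) (y * cj Q u) * Q a = polar Q (x * u) (cj Q v * y) * Q a := by
        rw [← step1]
        linear_combination step4
      exact mul_right_cancel₀ hQa this
    have hD : cj Q v * (y * cj Q u) - (cj Q v * y) * cj Q u = 0 := by
      apply hndV _ (V.sub_mem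
        (hclV _ (hcjV v hv) _ (hclV y hy _ (hcjV u hu)))
        (hclV _ (hclV _ (hcjV v hv) y hy) _ (hcjV u hu)))
      intro x hx
      rw [polar_sub_left]
      have lhsx : polar Q (cj Q v * (y * cj Q u)) x = polar Q (y * cj Q u) (v * x) := by
        rw [radj hmul (cj Q v) (y * cj Q u) x, cjcj hmul hnd]
      have rhsx : polar Q ((cj Q v * y) * cj Q u) x = polar Q (cj Q v * y) (x * u) := by
        rw [ladj hmul (cj Q v * y) (cj Q u) x, cjcj hmul hnd]
      rw [lhsx, rhsx, polar_comm (⇑Q) (y * cj Q u) (v * x), key x hx,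
        polar_comm (⇑Q) (x * u) (cj Q v * y), sub_self]
    rw [sub_eq_zero] at hD
    exact hD
  intro p hp q hq r hr
  have := hmid (cj Q r) (hcjV r hr) (cj Q p) (hcjV p hp) q hq
  rw [cjcj hmul hnd, cjcj hmul hnd] at this
  exact this.symm

include hmul hnd in
lemma double (h2 : (2 : K) ≠ 0) (h1V : (1 : A) ∈ V)
    (hclV : ∀ x ∈ V, ∀ y ∈ V, x * y ∈ V)
    (hndV : ∀ x ∈ V, (∀ y ∈ V, polar Q x y = 0) → x = 0) (hVtop : V ≠ ⊤) :
    ∃ W : Submodule K A, (1 : A) ∈ W ∧ (∀ x ∈ W, ∀ y ∈ W, x * y ∈ W) ∧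
      (∀ x ∈ W, (∀ y ∈ W, polar Q x y = 0) → x = 0) ∧
      finrank K W = 2 * finrank K V ∧
      ((∀ p ∈ W, ∀ q ∈ W, ∀ r ∈ W, p * q * r = p * (q * r)) →
        ∀ p ∈ V, ∀ q ∈ V, p * q = q * p) ∧
      ((∀ p ∈ W, ∀ q ∈ W, p * q = q * p) → V ≤ Submodule.span K {(1 : A)}) := by
  classical
  obtain ⟨a, haV, hQa⟩ := exists_a hnd V hndV hVtop
  have ha1 : polar Q a 1 = 0 := haV 1 h1V
  have hcjV : ∀ x ∈ V, cj Q x ∈ V := fun x hx =>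
    V.sub_mem (V.smul_mem _ h1V) hx
  have hxa : ∀ x ∈ V, polar Q x a = 0 := fun x hx => by
    rw [polar_comm]; exact haV x hx
  have horth : ∀ y ∈ V, ∀ v ∈ V, polar Q (y * a) v = 0 := by
    intro y hy v hv
    rw [radj hmul y a v]
    exact haV _ (hclV _ (hcjV y hy) v hv)
  have hinj0 : ∀ z : A, z * a = 0 → z = 0 := by
    intro z h
    apply hnd
    intro w
    have hb := bmull hmul z w a
    rw [h, polar_zero_left] at hb
    exact ((mul_eq_zero.mp hb.symm).resolve_right hQa)
  set W : Submodule K A := V ⊔ V.map (LinearMap.mulRight K a) with hW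
  have hmemW : ∀ w : A, w ∈ W ↔ ∃ x ∈ V, ∃ y ∈ V, w = x + y * a := by
    intro w
    rw [hW, Submodule.mem_sup]
    constructor
    · rintro ⟨x, hx, z, hz, rfl⟩
      obtain ⟨y, hy, rfl⟩ := Submodule.mem_map.mp hz
      exact ⟨x, hx, y, hy, rfl⟩
    · rintro ⟨x, hx, y, hy, rfl⟩
      exact ⟨x, hx, y * a, Submodule.mem_map.mpr ⟨y, hy, rfl⟩, rfl⟩
  have hVW : ∀ x ∈ V, x ∈ W := fun x hx =>
    (hmemW x).mpr ⟨x, hx, 0, V.zero_mem, by simp⟩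
  have haW : a ∈ W := (hmemW a).mpr ⟨0, V.zero_mem, 1, h1V, by simp⟩
  have hprod : ∀ x ∈ V, ∀ y ∈ V, ∀ u ∈ V, ∀ v ∈ V,
      (x + y * a) * (u + v * a)
        = (x * u - Q a • (cj Q v * y)) + (v * x + y * cj Q u) * a := by
    intro x hx y hy u hu v hv
    have hC1 : x * (v * a) = (v * x) * a :=
      C1 hmul hnd ha1 (hxa x hx) (hxa v hv) (hxa _ (hclV v hv x hx))
    have hC2 : (y * a) * u = (y * cj Q u) * a := C2 hmul hnd ha1 (hxa u hu) y
    have hC3 : (y * a) * (v * a) = -(Q a) • (cj Q v * y) :=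
      C3 hmul hnd ha1 (hxa y hy) (hxa v hv) (hxa _ (hclV y hy v hv))
    rw [add_mul, mul_add, mul_add, hC1, hC2, hC3, add_mul]
    module
  refine ⟨W, hVW 1 h1V, ?_, ?_, ?_, ?_, ?_⟩
  · -- closed under multiplication
    intro w hw z hz
    obtain ⟨x, hx, y, hy, rfl⟩ := (hmemW w).mp hw
    obtain ⟨u, hu, v, hv, rfl⟩ := (hmemW z).mp hz
    rw [hprod x hx y hy u hu v hv]
    exact (hmemW _).mpr ⟨x * u - Q a • (cj Q v * y),
      V.sub_mem (hclV x hx u hu) (V.smul_mem _ (hclV _ (hcjV v hv) y hy)),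
      v * x + y * cj Q u,
      V.add_mem (hclV v hv x hx) (hclV y hy _ (hcjV u hu)), rfl⟩
  · -- nondegenerate
    intro w hw hperp
    obtain ⟨x, hx, y, hy, rfl⟩ := (hmemW w).mp hw
    have hx0 : x = 0 := by
      apply hndV x hx
      intro v hv
      have h₁ := hperp v (hVW v hv)
      rw [polar_add_left, horth y hy v hv, add_zero] at h₁
      exact h₁
    have hy0 : y = 0 := by
      apply hndV y hy
      intro v hv
      have hva : v * a ∈ W := (hmemW _).mpr ⟨0, V.zero_mem, v, hv, by simp⟩
      have h₁ := hperp _ hva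
      rw [hx0, zero_add] at h₁
      have h₂ := bmull hmul y v a
      rw [h₁] at h₂
      exact ((mul_eq_zero.mp h₂.symm).resolve_right hQa)
    rw [hx0, hy0]
    simp
  · -- rank
    have hinj : Function.Injective (LinearMap.mulRight K a) := by
      rw [← LinearMap.ker_eq_bot, LinearMap.ker_eq_bot']
      intro z hz
      exact hinj0 z (by simpa using hz)
    have hrank1 : finrank K (V.map (LinearMap.mulRight K a)) = finrank K V :=
      (Submodule.equivMapOfInjective _ hinj V).finrank_eq.symm
    have hinf : V ⊓ V.map (LinearMap.mulRight K a) = ⊥ := by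
      rw [eq_bot_iff]
      rintro z ⟨hzV, hzMap⟩
      obtain ⟨y, hy, rfl⟩ := Submodule.mem_map.mp hzMap
      rw [Submodule.mem_bot]
      exact hndV _ hzV (fun v hv => horth y hy v hv)
    have hsum := Submodule.finrank_sup_add_finrank_inf_eq V
      (V.map (LinearMap.mulRight K a))
    rw [hinf, finrank_bot, add_zero, hrank1] at hsum
    rw [hW, hsum, two_mul]
  · -- associativity of W implies commutativity of V
    intro hass p hp q hq
    have key : ∀ x ∈ V, ∀ y ∈ V, cj Q x * cj Q y = cj Q y * cj Q x := by
      intro x hx y hy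
      have h := hass a haW x (hVW x hx) y (hVW y hy)
      rw [axc' hmul hnd ha1 (hxa x hx), C2 hmul hnd ha1 (hxa y hy) (cj Q x),
        axc' hmul hnd ha1 (hxa _ (hclV x hx y hy)), cjmul hmul hnd] at h
      have h0 : (cj Q x * cj Q y - cj Q y * cj Q x) * a = 0 := by
        rw [sub_mul, h, sub_self]
      have := hinj0 _ h0
      rwa [sub_eq_zero] at this
    have := key (cj Q p) (hcjV p hp) (cj Q q) (hcjV q hq)
    rwa [cjcj hmul hnd, cjcj hmul hnd] at this
  · -- commutativity of W implies V trivial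
    intro hcomm p hp
    have h := hcomm p (hVW p hp) a haW
    rw [axc' hmul hnd ha1 (hxa p hp)] at h
    have h0 : (p - cj Q p) * a = 0 := by rw [sub_mul, h, sub_self]
    have hpc := hinj0 _ h0
    rw [sub_eq_zero] at hpc
    have hpp : (2 : K) • p = polar Q p 1 • (1 : A) := by
      rw [two_smul]
      nth_rewrite 2 [hpc]
      rw [cj]
      abel
    have hfin : ((2 : K)⁻¹ * polar Q p 1) • (1 : A) = p := by
      rw [mul_smul, ← hpp, smul_smul, inv_mul_cancel₀ h2, one_smul]
    exact Submodule.mem_span_singleton.mpr ⟨(2 : K)⁻¹ * polar Q p 1, hfin⟩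

end subalg

end HJaux


open QuadraticMap Module HJaux in
/-- Hurwitz–Jacobson theorem: a composition algebra over a field `K` of characteristic ≠ 2
(a unital, not necessarily associative or commutative `K`-algebra with a multiplicative
nondegenerate quadratic form) has dimension 1, 2, 4 or 8 over `K`. -/
theorem hurwitz_jacobson
    (K : Type*) [Field K] (h2 : (2 : K) ≠ 0)
    (A : Type*) [NonAssocRing A] [Module K A] [IsScalarTower K A A] [SMulCommClass K A A]
    [Nontrivial A] [FiniteDimensional K A]
    (Q : QuadraticForm K A)
    (hmul : ∀ x y : A, Q (x * y) = Q x * Q y)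
    (hnd : ∀ x : A, (∀ y : A, (Q (x + y) - Q x - Q y) / 2 = 0) → x = 0) :
    Module.finrank K A ∈ ({1, 2, 4, 8} : Set ℕ) := by
  classical
  have hnd' : ∀ x : A, (∀ y : A, polar Q x y = 0) → x = 0 := by
    intro x h
    apply hnd
    intro y
    have h' := h y
    simp only [polar] at h'
    rw [h', zero_div]
  set V0 : Submodule K A := Submodule.span K {(1 : A)} with hV0
  have h1V0 : (1 : A) ∈ V0 := Submodule.mem_span_singleton_self 1
  have hclV0 : ∀ x ∈ V0, ∀ y ∈ V0, x * y ∈ V0 := by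
    intro x hx y hy
    obtain ⟨c, rfl⟩ := Submodule.mem_span_singleton.mp hx
    obtain ⟨d, rfl⟩ := Submodule.mem_span_singleton.mp hy
    rw [smul_mul_assoc, mul_smul_comm, one_mul, smul_smul]
    exact Submodule.smul_mem _ _ h1V0
  have hndV0 : ∀ x ∈ V0, (∀ y ∈ V0, polar Q x y = 0) → x = 0 := by
    intro x hx hall
    obtain ⟨c, rfl⟩ := Submodule.mem_span_singleton.mp hx
    have hone := hall 1 h1V0
    rw [polar_smul_left, b11 hmul hnd', smul_eq_mul] at hone
    rcases mul_eq_zero.mp hone with h | h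
    · rw [h, zero_smul]
    · exact absurd h h2
  have hr0 : finrank K V0 = 1 := finrank_span_singleton one_ne_zero
  by_cases hT0 : V0 = ⊤
  · have : finrank K A = 1 := by rw [← finrank_top K A, ← hT0, hr0]
    simp [this]
  obtain ⟨V1, h1V1, hclV1, hndV1, hr1, hac1, hcm1⟩ :=
    double hmul hnd' V0 h2 h1V0 hclV0 hndV0 hT0
  rw [hr0] at hr1
  by_cases hT1 : V1 = ⊤
  · have : finrank K A = 2 := by rw [← finrank_top K A, ← hT1, hr1]
    simp [this]
  obtain ⟨V2, h1V2, hclV2, hndV2, hr2, hac2, hcm2⟩ :=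
    double hmul hnd' V1 h2 h1V1 hclV1 hndV1 hT1
  rw [hr1] at hr2
  by_cases hT2 : V2 = ⊤
  · have : finrank K A = 4 := by rw [← finrank_top K A, ← hT2, hr2]
    simp [this]
  obtain ⟨V3, h1V3, hclV3, hndV3, hr3, hac3, hcm3⟩ :=
    double hmul hnd' V2 h2 h1V2 hclV2 hndV2 hT2
  rw [hr2] at hr3
  by_cases hT3 : V3 = ⊤
  · have : finrank K A = 8 := by rw [← finrank_top K A, ← hT3, hr3]
    simp [this]
  exfalso
  have hassoc3 := proper_assoc hmul hnd' V3 h1V3 hclV3 hndV3 hT3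
  have hcomm2 := hac3 hassoc3
  have hle := hcm2 hcomm2
  have hfin : finrank K V1 ≤ finrank K (Submodule.span K {(1 : A)}) :=
    Submodule.finrank_mono hle
  rw [hr1, finrank_span_singleton (one_ne_zero (α := A))] at hfin
  omega
end
end

section
/- Hurwitz's theorem (1898): let A be a Euclidean Hurwitz algebra (real normed division algebra). Then A is isomorphic to one of ℝ, ℂ, the quaternions ℍ = Quaternion ℝ, or the octonions 𝕆: there exist one of these four algebras B and an ℝ-linear bijection φ : B ≃ₗ[ℝ] A with φ(1) = 1 and φ(x*y) = φ(x)*φ(y) for all x, y ∈ B. -/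
noncomputable section

/-- The Cayley–Dickson product on the real octonions `𝕆 = Quaternion ℝ × Quaternion ℝ`:
`(a,b)·(c,d) = (a c - d* b, b c* + d a)`. -/
def octMul (x y : Quaternion ℝ × Quaternion ℝ) : Quaternion ℝ × Quaternion ℝ :=
  (x.1 * y.1 - star y.2 * x.2, x.2 * star y.1 + y.2 * x.1)

open scoped RealInnerProductSpace

namespace HurwitzProof

structure Hur (A : Type*) [NormedAddCommGroup A] [InnerProductSpace ℝ A] where
  mul : A →ₗ[ℝ] A →ₗ[ℝ] A
  e : A
  one_mul' : ∀ x, mul e x = x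
  mul_one' : ∀ x, mul x e = x
  ee : (inner (𝕜 := ℝ) e e) = 1
  qmul : ∀ x y, (inner (𝕜 := ℝ) (mul x y) (mul x y)) = inner (𝕜 := ℝ) x x * inner (𝕜 := ℝ) y y

variable {A : Type*} [NormedAddCommGroup A] [InnerProductSpace ℝ A]

namespace Hur

variable (H : Hur A)

/-- polarization in the second argument -/
lemma polar1 (x y z : A) : ⟪H.mul x y, H.mul x z⟫ = ⟪x, x⟫ * ⟪y, z⟫ := by
  have h := H.qmul x (y + z)
  simp only [map_add, inner_add_left, inner_add_right, H.qmul] at h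
  have h1 : ⟪H.mul x z, H.mul x y⟫ = ⟪H.mul x y, H.mul x z⟫ := real_inner_comm _ _
  have h2 : ⟪z, y⟫ = ⟪y, z⟫ := real_inner_comm _ _
  rw [h1, h2] at h
  linarith

lemma polar2 (x y z : A) : ⟪H.mul x z, H.mul y z⟫ = ⟪x, y⟫ * ⟪z, z⟫ := by
  have h := H.qmul (x + y) z
  simp only [map_add, LinearMap.add_apply, inner_add_left, inner_add_right, H.qmul] at h
  have h1 : ⟪H.mul y z, H.mul x z⟫ = ⟪H.mul x z, H.mul y z⟫ := real_inner_comm _ _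
  have h2 : ⟪y, x⟫ = ⟪x, y⟫ := real_inner_comm _ _
  rw [h1, h2] at h
  linarith

lemma exch (x y u z : A) :
    ⟪H.mul x y, H.mul u z⟫ + ⟪H.mul u y, H.mul x z⟫ = 2 * ⟪x, u⟫ * ⟪y, z⟫ := by
  have h := H.polar1 (x + u) y z
  simp only [map_add, LinearMap.add_apply, inner_add_left, inner_add_right, H.polar1] at h
  have h2 : ⟪u, x⟫ = ⟪x, u⟫ := real_inner_comm _ _
  rw [h2] at h
  linarith [H.polar1 x y z, H.polar1 u y z]

/-- conjugation -/
def conj (x : A) : A := (2 * ⟪x, H.e⟫) • H.e - x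

lemma conj_e : H.conj H.e = H.e := by
  simp only [conj, H.ee]; simp [two_smul]

lemma inner_conj_left (x y : A) : ⟪H.conj x, y⟫ = 2 * ⟪x, H.e⟫ * ⟪H.e, y⟫ - ⟪x, y⟫ := by
  simp [conj, inner_sub_left, real_inner_smul_left]

lemma inner_conj_right (x y : A) : ⟪x, H.conj y⟫ = 2 * ⟪y, H.e⟫ * ⟪x, H.e⟫ - ⟪x, y⟫ := by
  simp [conj, inner_sub_right, real_inner_smul_right]

lemma conj_conj (x : A) : H.conj (H.conj x) = x := by
  simp only [conj, inner_sub_left, real_inner_smul_left, H.ee]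
  module

lemma ladj (x y z : A) : ⟪H.mul x y, z⟫ = ⟪y, H.mul (H.conj x) z⟫ := by
  have h := H.exch x y H.e z
  rw [H.one_mul' y, H.one_mul' z] at h
  simp only [conj, map_sub, map_smul, LinearMap.sub_apply, LinearMap.smul_apply,
    inner_sub_right, real_inner_smul_right, H.one_mul']
  try simp only [H.one_mul']
  linarith

lemma radj (x y z : A) : ⟪H.mul x y, z⟫ = ⟪x, H.mul z (H.conj y)⟫ := by
  have h := H.exch x y z H.e
  rw [H.mul_one' x, H.mul_one' z] at h
  simp only [conj, map_sub, map_smul, inner_sub_right, real_inner_smul_right, H.mul_one']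
  have : ⟪H.mul z y, x⟫ = ⟪x, H.mul z y⟫ := real_inner_comm _ _
  linarith

lemma inner_conj_symm (x z : A) : ⟪x, H.conj z⟫ = ⟪H.conj x, z⟫ := by
  rw [H.inner_conj_left, H.inner_conj_right, real_inner_comm H.e z]
  ring

lemma inner_conj_conj (x y : A) : ⟪H.conj x, H.conj y⟫ = ⟪x, y⟫ := by
  have h1 : ⟪H.e, y⟫ = ⟪y, H.e⟫ := real_inner_comm _ _
  simp only [conj, inner_sub_left, inner_sub_right, real_inner_smul_left,
    real_inner_smul_right, H.ee, h1]
  ring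

/-- polarized `polar2` -/
lemma exch2 (x y u z : A) :
    ⟪H.mul x y, H.mul u z⟫ + ⟪H.mul x z, H.mul u y⟫ = 2 * ⟪x, u⟫ * ⟪y, z⟫ := by
  have h := H.polar2 x u (y + z)
  simp only [map_add, inner_add_left, inner_add_right, H.polar2] at h
  have h1 : ⟪H.mul x z, H.mul u y⟫ = ⟪H.mul x y, H.mul u z⟫ →
      True := fun _ => trivial
  have h2 : ⟪y, z⟫ = ⟪z, y⟫ := real_inner_comm _ _
  rw [← h2] at h
  linarith

/-- left inverse law -/
lemma linv (x y : A) : H.mul (H.conj x) (H.mul x y) = ⟪x, x⟫ • y := by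
  apply ext_inner_right ℝ
  intro z
  have h1 : ⟪H.mul (H.conj x) (H.mul x y), z⟫ = ⟪H.mul x y, H.mul x z⟫ := by
    rw [H.ladj, H.conj_conj]
  rw [h1, H.polar1, real_inner_smul_left]

/-- right inverse law -/
lemma rinv (x y : A) : H.mul (H.mul y x) (H.conj x) = ⟪x, x⟫ • y := by
  apply ext_inner_right ℝ
  intro z
  have h1 : ⟪H.mul (H.mul y x) (H.conj x), z⟫ = ⟪H.mul y x, H.mul z x⟫ := by
    rw [H.radj, H.conj_conj]
  rw [h1, H.polar2, real_inner_smul_left]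
  ring

/-- linearized left inverse law -/
lemma linL (x u y : A) :
    H.mul (H.conj x) (H.mul u y) + H.mul (H.conj u) (H.mul x y) = (2 * ⟪x, u⟫) • y := by
  apply ext_inner_right ℝ
  intro z
  rw [inner_add_left]
  have e1 : ⟪H.mul (H.conj x) (H.mul u y), z⟫ = ⟪H.mul u y, H.mul x z⟫ := by
    rw [H.ladj, H.conj_conj]
  have e2 : ⟪H.mul (H.conj u) (H.mul x y), z⟫ = ⟪H.mul x y, H.mul u z⟫ := by
    rw [H.ladj, H.conj_conj]
  rw [e1, e2, real_inner_smul_left]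
  linarith [H.exch x y u z]

/-- linearized right inverse law -/
lemma linR (x u y : A) :
    H.mul (H.mul y x) (H.conj u) + H.mul (H.mul y u) (H.conj x) = (2 * ⟪x, u⟫) • y := by
  apply ext_inner_right ℝ
  intro z
  rw [inner_add_left]
  have e1 : ⟪H.mul (H.mul y x) (H.conj u), z⟫ = ⟪H.mul y x, H.mul z u⟫ := by
    rw [H.radj, H.conj_conj]
  have e2 : ⟪H.mul (H.mul y u) (H.conj x), z⟫ = ⟪H.mul y u, H.mul z x⟫ := by
    rw [H.radj, H.conj_conj]
  rw [e1, e2, real_inner_smul_left]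
  linarith [H.exch2 y x z u]

/-- conjugation is an anti-homomorphism -/
lemma conj_mul (x y : A) : H.conj (H.mul x y) = H.mul (H.conj y) (H.conj x) := by
  apply ext_inner_right ℝ
  intro z
  have h1 : ⟪H.mul (H.conj y) (H.conj x), z⟫ = ⟪H.conj x, H.mul y z⟫ := by
    rw [H.ladj, H.conj_conj]
  have h2 : ⟪H.conj x, H.mul y z⟫ = ⟪H.mul (H.conj x) (H.conj z), y⟫ := by
    rw [H.radj (H.conj x) (H.conj z) y, H.conj_conj]
  have h3 : ⟪H.mul (H.conj x) (H.conj z), y⟫ = ⟪y, H.mul (H.conj x) (H.conj z)⟫ :=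
    real_inner_comm _ _
  have h4 : ⟪y, H.mul (H.conj x) (H.conj z)⟫ = ⟪H.mul x y, H.conj z⟫ := (H.ladj x y _).symm
  have h5 : ⟪H.mul x y, H.conj z⟫ = ⟪H.conj (H.mul x y), z⟫ := H.inner_conj_symm _ z
  rw [h1, h2, h3, h4, h5]

lemma conj_of_perp {i : A} (hie : ⟪i, H.e⟫ = 0) : H.conj i = -i := by
  simp [conj, hie]

lemma mul_i_i {i : A} (hie : ⟪i, H.e⟫ = 0) (hii : ⟪i, i⟫ = 1) : H.mul i i = - H.e := by
  have h := H.rinv i H.e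
  rw [H.one_mul', H.conj_of_perp hie, hii, one_smul, map_neg] at h
  exact neg_eq_iff_eq_neg.mp h

lemma mul_mul_i_i {i a : A} (hie : ⟪i, H.e⟫ = 0) (hii : ⟪i, i⟫ = 1) :
    H.mul (H.mul a i) i = -a := by
  have h := H.rinv i a
  rw [H.conj_of_perp hie, hii, one_smul, map_neg] at h
  exact neg_eq_iff_eq_neg.mp h

lemma inner_mul_left_i (a i b : A) :
    ⟪H.mul a i, b⟫ = 2 * ⟪a, H.e⟫ * ⟪i, b⟫ - ⟪i, H.mul a b⟫ := by
  rw [H.ladj]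
  simp only [conj, map_sub, map_smul, LinearMap.sub_apply, LinearMap.smul_apply,
    inner_sub_right, real_inner_smul_right, H.one_mul']
  try simp only [H.one_mul']
  try ring

lemma inner_mul_i_e {i a : A} (hie : ⟪i, H.e⟫ = 0) (hia : ⟪i, a⟫ = 0) :
    ⟪H.mul a i, H.e⟫ = 0 := by
  rw [H.inner_mul_left_i, H.mul_one', hie, hia]; ring

lemma conj_mul_i {i a : A} (hie : ⟪i, H.e⟫ = 0) (hia : ⟪i, a⟫ = 0) :
    H.conj (H.mul a i) = -(H.mul a i) := by
  simp [conj, H.inner_mul_i_e hie hia]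

lemma inner_conj_perp {i b : A} (hie : ⟪i, H.e⟫ = 0) (hib : ⟪i, b⟫ = 0) :
    ⟪i, H.conj b⟫ = 0 := by
  rw [H.inner_conj_right, hie, hib]; ring

lemma R2 {i : A} (hie : ⟪i, H.e⟫ = 0) {a b : A} (hib : ⟪i, b⟫ = 0) :
    H.mul (H.mul a i) b = H.mul (H.mul a (H.conj b)) i := by
  have h := H.linR i (H.conj b) a
  rw [H.conj_conj, H.conj_of_perp hie, H.inner_conj_perp hie hib] at h
  simp only [map_neg, mul_zero, zero_mul, zero_smul] at h
  have := add_eq_zero_iff_eq_neg.mp h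
  rw [this]; abel

lemma Rib {i : A} (hie : ⟪i, H.e⟫ = 0) {b : A} (hib : ⟪i, b⟫ = 0) :
    H.mul i b = H.mul (H.conj b) i := by
  have h := H.R2 (a := H.e) hie hib
  rwa [H.one_mul', H.one_mul'] at h

lemma R1 {i : A} (hie : ⟪i, H.e⟫ = 0) {a b : A} (hia : ⟪i, a⟫ = 0) (hib : ⟪i, b⟫ = 0)
    (hiba : ⟪i, H.mul b a⟫ = 0) :
    H.mul a (H.mul b i) = H.mul (H.mul b a) i := by
  have hbi : H.mul b i = H.mul i (H.conj b) := by
    rw [H.Rib hie (H.inner_conj_perp hie hib), H.conj_conj]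
  have h := H.linL i (H.conj a) (H.conj b)
  rw [H.conj_conj, H.conj_of_perp hie, H.inner_conj_perp hie hia] at h
  simp only [map_neg, LinearMap.neg_apply, mul_zero, zero_mul, zero_smul] at h
  have h2 : H.mul i (H.mul (H.conj a) (H.conj b)) = H.mul a (H.mul i (H.conj b)) :=
    neg_add_eq_zero.mp h
  rw [hbi, ← h2, ← H.conj_mul, H.Rib hie (H.inner_conj_perp hie hiba), H.conj_conj]

lemma R3 {i : A} (hie : ⟪i, H.e⟫ = 0) (hii : ⟪i, i⟫ = 1) {a b : A} (hia : ⟪i, a⟫ = 0)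
    (hib : ⟪i, b⟫ = 0) (hiab : ⟪i, H.mul a b⟫ = 0) :
    H.mul (H.mul a i) (H.mul b i) = - H.mul (H.conj b) a := by
  apply ext_inner_right ℝ
  intro z
  have h1 : ⟪H.mul (H.mul a i) (H.mul b i), z⟫
      = - ⟪H.mul b i, H.mul (H.mul a i) z⟫ := by
    rw [H.ladj, H.conj_mul_i hie hia]
    simp only [map_neg, LinearMap.neg_apply, inner_neg_right]
  have h2 := H.exch b i (H.mul a i) z
  have h3 : ⟪b, H.mul a i⟫ = 0 := by
    rw [real_inner_comm, H.inner_mul_left_i, hib, hiab]; ring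
  rw [h3] at h2
  have h4 : H.mul (H.mul a i) i = -a := H.mul_mul_i_i hie hii
  rw [h4] at h2
  have h5 : ⟪(-a : A), H.mul b z⟫ = - ⟪z, H.mul (H.conj b) a⟫ := by
    rw [inner_neg_left, real_inner_comm, H.ladj]
  rw [h5] at h2
  have h6 : ⟪- H.mul (H.conj b) a, z⟫ = - ⟪z, H.mul (H.conj b) a⟫ := by
    rw [inner_neg_left, real_inner_comm]
  rw [h1, h6]
  linarith

lemma inner_mul_i_mul_i (a b i : A) (hii : ⟪i, i⟫ = 1) :
    ⟪H.mul a i, H.mul b i⟫ = ⟪a, b⟫ := by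
  rw [H.polar2, hii, mul_one]

lemma perp_mul_unit {B : Submodule ℝ A}
    (hmul : ∀ {x y : A}, x ∈ B → y ∈ B → H.mul x y ∈ B)
    {mu : A} (hmB : ∀ w ∈ B, ⟪mu, w⟫ = 0)
    {v w : A} (hv : v ∈ B) (hw : w ∈ B) : ⟪H.mul v mu, w⟫ = 0 := by
  rw [H.inner_mul_left_i, hmB w hw, hmB _ (hmul hv hw)]; ring

lemma norm_split {B : Submodule ℝ A}
    (hmul : ∀ {x y : A}, x ∈ B → y ∈ B → H.mul x y ∈ B)
    {mu : A} (hm1 : ⟪mu, mu⟫ = 1) (hmB : ∀ w ∈ B, ⟪mu, w⟫ = 0)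
    {v w : A} (hv : v ∈ B) (hw : w ∈ B) :
    ⟪v + H.mul w mu, v + H.mul w mu⟫ = ⟪v, v⟫ + ⟪w, w⟫ := by
  have h1 : ⟪H.mul w mu, v⟫ = 0 := H.perp_mul_unit hmul hmB hw hv
  have h2 : ⟪v, H.mul w mu⟫ = 0 := by rw [real_inner_comm]; exact h1
  rw [inner_add_left, inner_add_right, inner_add_right, h1, h2,
    H.inner_mul_i_mul_i _ _ _ hm1]
  ring

/-- proper subalgebras are associative -/
lemma cross {B : Submodule ℝ A} (heB : H.e ∈ B)
    (hmul : ∀ {x y : A}, x ∈ B → y ∈ B → H.mul x y ∈ B)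
    {mu : A} (hm1 : ⟪mu, mu⟫ = 1) (hmB : ∀ w ∈ B, ⟪mu, w⟫ = 0)
    {a b c d : A} (ha : a ∈ B) (hb : b ∈ B) (hc : c ∈ B) (hd : d ∈ B) :
    ⟪b, H.mul d (H.mul a c) - H.mul (H.mul d a) c⟫ = 0 := by
  have hconjB : ∀ w ∈ B, H.conj w ∈ B := fun w hw =>
    Submodule.sub_mem B (Submodule.smul_mem B _ heB) hw
  have hme := hmB _ heB
  have hma := hmB a ha
  have hmb := hmB b hb
  have hmc := hmB c hc
  have hmd := hmB d hd
  have hR1 : H.mul a (H.mul d mu) = H.mul (H.mul d a) mu :=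
    H.R1 hme hma hmd (hmB _ (hmul hd ha))
  have hR2 : H.mul (H.mul b mu) c = H.mul (H.mul b (H.conj c)) mu := H.R2 hme hmc
  have hR3 : H.mul (H.mul b mu) (H.mul d mu) = - H.mul (H.conj d) b :=
    H.R3 hme hm1 hmb hmd (hmB _ (hmul hb hd))
  set u : A := H.mul a c - H.mul (H.conj d) b with hu_def
  set v : A := H.mul d a + H.mul b (H.conj c) with hv_def
  have hu : u ∈ B := Submodule.sub_mem B (hmul ha hc) (hmul (hconjB d hd) hb)
  have hv : v ∈ B := Submodule.add_mem B (hmul hd ha) (hmul hb (hconjB c hc))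
  have hxy : H.mul (a + H.mul b mu) (c + H.mul d mu) = u + H.mul v mu := by
    have expand : H.mul (a + H.mul b mu) (c + H.mul d mu)
        = H.mul a c + H.mul a (H.mul d mu) + H.mul (H.mul b mu) c
          + H.mul (H.mul b mu) (H.mul d mu) := by
      simp only [map_add, LinearMap.add_apply]; abel
    rw [expand, hR1, hR2, hR3, hu_def, hv_def, map_add, LinearMap.add_apply]
    abel
  have hq := H.qmul (a + H.mul b mu) (c + H.mul d mu)
  rw [hxy, H.norm_split hmul hm1 hmB hu hv, H.norm_split hmul hm1 hmB ha hb,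
    H.norm_split hmul hm1 hmB hc hd] at hq
  -- expand ⟪u,u⟫ and ⟪v,v⟫
  have hcross1 : ⟪H.mul a c, H.mul (H.conj d) b⟫ = ⟪b, H.mul d (H.mul a c)⟫ := by
    rw [real_inner_comm, H.ladj, H.conj_conj]
  have hcross2 : ⟪H.mul d a, H.mul b (H.conj c)⟫ = ⟪b, H.mul (H.mul d a) c⟫ := by
    rw [real_inner_comm, H.radj, H.conj_conj]
  have huu : ⟪u, u⟫ = ⟪a,a⟫*⟪c,c⟫ - 2*⟪b, H.mul d (H.mul a c)⟫ + ⟪d,d⟫*⟪b,b⟫ := by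
    rw [hu_def]
    rw [inner_sub_left, inner_sub_right, inner_sub_right]
    rw [H.qmul, H.qmul, H.inner_conj_conj]
    have hsymm : ⟪H.mul (H.conj d) b, H.mul a c⟫ = ⟪H.mul a c, H.mul (H.conj d) b⟫ :=
      real_inner_comm _ _
    linarith [hcross1, hsymm]
  have hvv : ⟪v, v⟫ = ⟪d,d⟫*⟪a,a⟫ + 2*⟪b, H.mul (H.mul d a) c⟫ + ⟪b,b⟫*⟪c,c⟫ := by
    rw [hv_def]
    rw [inner_add_left, inner_add_right, inner_add_right]
    rw [H.qmul, H.qmul, H.inner_conj_conj]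
    have hsymm : ⟪H.mul b (H.conj c), H.mul d a⟫ = ⟪H.mul d a, H.mul b (H.conj c)⟫ :=
      real_inner_comm _ _
    linarith [hcross2, hsymm]
  rw [huu, hvv] at hq
  rw [inner_sub_right]
  linarith

lemma conj_add (x y : A) : H.conj (x + y) = H.conj x + H.conj y := by
  simp only [conj, inner_add_left]; module

lemma conj_smul (r : ℝ) (x : A) : H.conj (r • x) = r • H.conj x := by
  simp only [conj, real_inner_smul_left]; module

section Doubling

variable {K : Type*} [Ring K] [Module ℝ K] [StarRing K]

/-- the doubled embedding `(x, y) ↦ ψ x + (ψ y) * i` -/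
def dbl (ψ : K →ₗ[ℝ] A) (i : A) : K × K →ₗ[ℝ] A :=
  ψ.comp (LinearMap.fst ℝ K K) + ((H.mul.flip i).comp ψ).comp (LinearMap.snd ℝ K K)

lemma dbl_apply (ψ : K →ₗ[ℝ] A) (i : A) (p : K × K) :
    H.dbl ψ i p = ψ p.1 + H.mul (ψ p.2) i := rfl

variable {ψ : K →ₗ[ℝ] A} {i : A}

lemma dbl_one (hψ1 : ψ 1 = H.e) : H.dbl ψ i (1, 0) = H.e := by
  simp [dbl_apply, hψ1]

lemma dbl_fst (x : K) : H.dbl ψ i (x, 0) = ψ x := by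
  simp [dbl_apply]

lemma dbl_mul (hψ1 : ψ 1 = H.e)
    (hψm : ∀ x y : K, ψ (x * y) = H.mul (ψ x) (ψ y))
    (hψs : ∀ x : K, H.conj (ψ x) = ψ (star x))
    (hii : ⟪i, i⟫ = 1) (hiψ : ∀ x : K, ⟪i, ψ x⟫ = 0)
    (p q : K × K) :
    H.dbl ψ i (p.1 * q.1 - star q.2 * p.2, p.2 * star q.1 + q.2 * p.1)
      = H.mul (H.dbl ψ i p) (H.dbl ψ i q) := by
  obtain ⟨a, b⟩ := p
  obtain ⟨c, d⟩ := q
  have hie : ⟪i, H.e⟫ = 0 := by rw [← hψ1]; exact hiψ 1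
  have e1 : H.mul (ψ a) (H.mul (ψ d) i) = H.mul (H.mul (ψ d) (ψ a)) i :=
    H.R1 hie (hiψ a) (hiψ d) (by rw [← hψm]; exact hiψ (d * a))
  have e2 : H.mul (H.mul (ψ b) i) (ψ c) = H.mul (H.mul (ψ b) (ψ (star c))) i := by
    rw [H.R2 hie (hiψ c), hψs]
  have e3 : H.mul (H.mul (ψ b) i) (H.mul (ψ d) i) = - H.mul (ψ (star d)) (ψ b) := by
    rw [H.R3 hie hii (hiψ b) (hiψ d) (by rw [← hψm]; exact hiψ (b * d)), hψs]
  simp only [dbl_apply, map_add, map_sub, LinearMap.add_apply, LinearMap.sub_apply, hψm]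
  rw [e1, e2, e3]
  abel

lemma dbl_conj (hψ1 : ψ 1 = H.e)
    (hψs : ∀ x : K, H.conj (ψ x) = ψ (star x))
    (hiψ : ∀ x : K, ⟪i, ψ x⟫ = 0)
    (p : K × K) :
    H.conj (H.dbl ψ i p) = H.dbl ψ i (star p.1, -p.2) := by
  obtain ⟨a, b⟩ := p
  have hie : ⟪i, H.e⟫ = 0 := by rw [← hψ1]; exact hiψ 1
  have h1 : H.conj (H.mul (ψ b) i) = - H.mul (ψ b) i := by
    rw [H.conj_mul, H.conj_of_perp hie, hψs, map_neg, LinearMap.neg_apply,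
      H.Rib hie (hiψ (star b)), hψs, star_star]
  rw [dbl_apply, H.conj_add, h1, hψs, dbl_apply]
  simp

lemma dbl_inj (hψ1 : ψ 1 = H.e) (hψm : ∀ x y : K, ψ (x * y) = H.mul (ψ x) (ψ y))
    (hψinj : Function.Injective ψ) (hii : ⟪i, i⟫ = 1) (hiψ : ∀ x : K, ⟪i, ψ x⟫ = 0) :
    Function.Injective (H.dbl ψ i) := by
  have hker : ∀ p : K × K, H.dbl ψ i p = 0 → p = 0 := by
    rintro ⟨a, b⟩ h
    rw [dbl_apply] at h
    have hperp : ⟪H.mul (ψ b) i, ψ a⟫ = 0 := by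
      rw [H.inner_mul_left_i, hiψ a, ← hψm, hiψ (b * a)]; ring
    have h0 : ⟪ψ a + H.mul (ψ b) i, ψ a + H.mul (ψ b) i⟫ = (0 : ℝ) := by
      rw [h]; simp
    have hperp2 : ⟪ψ a, H.mul (ψ b) i⟫ = 0 := by rw [real_inner_comm]; exact hperp
    rw [inner_add_left, inner_add_right, inner_add_right,
      H.inner_mul_i_mul_i _ _ _ hii, hperp, hperp2] at h0
    have na := real_inner_self_nonneg (x := ψ a)
    have nb := real_inner_self_nonneg (x := ψ b)
    have ha' : ⟪ψ a, ψ a⟫ = (0 : ℝ) := by linarith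
    have hb' : ⟪ψ b, ψ b⟫ = (0 : ℝ) := by linarith
    have ha : ψ a = 0 := inner_self_eq_zero.mp ha'
    have hb : ψ b = 0 := inner_self_eq_zero.mp hb'
    have ha0 : a = 0 := hψinj (by rw [ha, map_zero])
    have hb0 : b = 0 := hψinj (by rw [hb, map_zero])
    simp [ha0, hb0]
  intro p q hpq
  have := hker (p - q) (by rw [map_sub, hpq, sub_self])
  exact sub_eq_zero.mp this

end Doubling

lemma exists_unit_perp [FiniteDimensional ℝ A] {B : Submodule ℝ A} (hB : B ≠ ⊤) :
    ∃ i : A, ⟪i, i⟫ = 1 ∧ ∀ w ∈ B, ⟪i, w⟫ = 0 := by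
  have hbot : Bᗮ ≠ ⊥ := by rwa [ne_eq, Submodule.orthogonal_eq_bot_iff]
  obtain ⟨v, hvB, hv0⟩ := Submodule.exists_mem_ne_zero_of_ne_bot hbot
  have hn : ‖v‖ ≠ 0 := norm_ne_zero_iff.mpr hv0
  refine ⟨(‖v‖)⁻¹ • v, ?_, ?_⟩
  · rw [real_inner_smul_left, real_inner_smul_right, real_inner_self_eq_norm_sq]
    field_simp
  · intro w hw
    rw [real_inner_smul_left]
    have := hvB w hw
    rw [real_inner_comm] at this
    rw [this, mul_zero]

end Hur

/-! transports -/

def toC : ℂ →ₗ[ℝ] ℝ × ℝ := Complex.equivRealProdLm.toLinearMap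

lemma toC_apply (z : ℂ) : toC z = (z.re, z.im) := rfl

lemma toC_inj : Function.Injective toC := Complex.equivRealProdLm.injective

lemma toC_one : toC 1 = (1, 0) := by simp [toC_apply]

lemma toC_mul (z w : ℂ) :
    toC (z * w) = ((toC z).1 * (toC w).1 - star (toC w).2 * (toC z).2,
      (toC z).2 * star (toC w).1 + (toC w).2 * (toC z).1) := by
  simp only [toC_apply, Complex.mul_re, Complex.mul_im, star_trivial, Prod.mk.injEq]
  constructor <;> ring

lemma toC_star (z : ℂ) :
    toC (star z) = (star (toC z).1, -(toC z).2) := by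
  simp only [toC_apply, star_trivial, Complex.star_def, Complex.conj_re, Complex.conj_im]

def toH : Quaternion ℝ →ₗ[ℝ] ℂ × ℂ :=
  LinearMap.prod
    (Complex.equivRealProdLm.symm.toLinearMap.comp
      (LinearMap.prod (QuaternionAlgebra.reₗ _ _ _) (QuaternionAlgebra.imIₗ _ _ _)))
    (Complex.equivRealProdLm.symm.toLinearMap.comp
      (LinearMap.prod (QuaternionAlgebra.imJₗ _ _ _) (QuaternionAlgebra.imKₗ _ _ _)))

lemma toH_apply (q : Quaternion ℝ) :
    toH q = (Complex.equivRealProdLm.symm (q.re, q.imI),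
             Complex.equivRealProdLm.symm (q.imJ, q.imK)) := rfl

lemma toH_apply' (q : Quaternion ℝ) :
    toH q = (⟨q.re, q.imI⟩, (⟨q.imJ, q.imK⟩ : ℂ)) := by
  rw [toH_apply, Prod.mk.injEq]
  constructor <;> (apply Complex.ext <;> simp [Complex.equivRealProdLm_symm_apply])

lemma toH_inj : Function.Injective toH := by
  intro q r h
  rw [toH_apply', toH_apply', Prod.mk.injEq, Complex.ext_iff, Complex.ext_iff] at h
  ext <;> tauto

lemma toH_one : toH 1 = (1, 0) := by
  rw [toH_apply', Prod.mk.injEq]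
  constructor <;> (apply Complex.ext <;> simp [Quaternion.re_one, Quaternion.imI_one, Quaternion.imJ_one, Quaternion.imK_one])

lemma toH_mul (z w : Quaternion ℝ) :
    toH (z * w) = ((toH z).1 * (toH w).1 - star (toH w).2 * (toH z).2,
      (toH z).2 * star (toH w).1 + (toH w).2 * (toH z).1) := by
  simp only [toH_apply', Prod.mk.injEq]
  constructor <;>
  · apply Complex.ext <;>
    simp [Complex.mul_re, Complex.mul_im, Quaternion.re_mul, Quaternion.imI_mul,
      Quaternion.imJ_mul, Quaternion.imK_mul] <;> ring

lemma toH_star (q : Quaternion ℝ) :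
    toH (star q) = (star (toH q).1, -(toH q).2) := by
  simp only [toH_apply', Prod.mk.injEq]
  constructor <;>
  · apply Complex.ext <;>
    simp [Quaternion.re_star, Quaternion.imI_star, Quaternion.imJ_star, Quaternion.imK_star]

end HurwitzProof

open HurwitzProof in
/-- Hurwitz's theorem (1898): a Euclidean Hurwitz algebra — a finite-dimensional real
inner product space `A`, nontrivial, with a (not necessarily associative) bilinear unital
multiplication `mul` with unit `e` whose norm is multiplicative — is isomorphic, as a
unital algebra, to `ℝ`, `ℂ`, the quaternions `ℍ`, or the octonions
`𝕆 = Quaternion ℝ × Quaternion ℝ` with the Cayley–Dickson product. -/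
theorem hurwitz_classification
    (A : Type*) [NormedAddCommGroup A] [InnerProductSpace ℝ A]
    [FiniteDimensional ℝ A] [Nontrivial A]
    (mul : A →ₗ[ℝ] A →ₗ[ℝ] A) (e : A)
    (h_one_mul : ∀ x, mul e x = x) (h_mul_one : ∀ x, mul x e = x)
    (hnorm : ∀ x y, ‖mul x y‖ = ‖x‖ * ‖y‖) :
    (∃ φ : ℝ ≃ₗ[ℝ] A, φ 1 = e ∧ ∀ x y : ℝ, φ (x * y) = mul (φ x) (φ y)) ∨
    (∃ φ : ℂ ≃ₗ[ℝ] A, φ 1 = e ∧ ∀ x y : ℂ, φ (x * y) = mul (φ x) (φ y)) ∨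
    (∃ φ : Quaternion ℝ ≃ₗ[ℝ] A, φ 1 = e ∧
      ∀ x y : Quaternion ℝ, φ (x * y) = mul (φ x) (φ y)) ∨
    (∃ φ : (Quaternion ℝ × Quaternion ℝ) ≃ₗ[ℝ] A,
      φ ((1 : Quaternion ℝ), (0 : Quaternion ℝ)) = e ∧
      ∀ x y : Quaternion ℝ × Quaternion ℝ, φ (octMul x y) = mul (φ x) (φ y)) := by
  classical
  have he0 : e ≠ 0 := by
    intro h
    obtain ⟨x, y, hxy⟩ := exists_pair_ne A
    have hx : ∀ z : A, z = 0 := fun z => by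
      have h2 := h_one_mul z
      rw [h] at h2
      simpa using h2.symm
    exact hxy ((hx x).trans (hx y).symm)
  have hne : ‖e‖ = 1 := by
    have h1 := hnorm e e
    rw [h_one_mul e] at h1
    have hn0 : ‖e‖ ≠ 0 := norm_ne_zero_iff.mpr he0
    have h2 : ‖e‖ * 1 = ‖e‖ * ‖e‖ := by rw [mul_one]; exact h1
    exact (mul_left_cancel₀ hn0 h2).symm
  have hq : ∀ x y : A, (inner ℝ (mul x y) (mul x y) : ℝ) = inner ℝ x x * inner ℝ y y := by
    intro x y
    rw [real_inner_self_eq_norm_sq, real_inner_self_eq_norm_sq, real_inner_self_eq_norm_sq,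
      hnorm]
    ring
  have hee : (inner ℝ e e : ℝ) = 1 := by rw [real_inner_self_eq_norm_sq, hne]; norm_num
  let H : Hur A := ⟨mul, e, h_one_mul, h_mul_one, hee, hq⟩
  -- Level 0 : ℝ
  let ψ0 : ℝ →ₗ[ℝ] A := LinearMap.toSpanSingleton ℝ A e
  have hψ0_apply : ∀ r : ℝ, ψ0 r = r • e := fun r => rfl
  have hψ01 : ψ0 1 = e := one_smul ℝ e
  have hψ0m : ∀ x y : ℝ, ψ0 (x * y) = mul (ψ0 x) (ψ0 y) := by
    intro x y
    show (x * y) • e = mul (x • e) (y • e)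
    rw [map_smul, h_mul_one, smul_smul, mul_comm]
  have hψ0s : ∀ x : ℝ, H.conj (ψ0 x) = ψ0 (star x) := by
    intro x
    rw [star_trivial, hψ0_apply, H.conj_smul]
    congr 1
    exact H.conj_e
  have hψ0inj : Function.Injective ψ0 := by
    intro a b hab
    simp only [hψ0_apply] at hab
    have := sub_eq_zero.mpr hab
    rw [← sub_smul] at this
    rcases smul_eq_zero.mp this with h | h
    · exact sub_eq_zero.mp h
    · exact absurd h he0
  by_cases h0 : LinearMap.range ψ0 = ⊤
  · exact Or.inl ⟨LinearEquiv.ofBijective ψ0 ⟨hψ0inj, LinearMap.range_eq_top.mp h0⟩,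
      hψ01, hψ0m⟩
  -- Level 1 : ℂ
  obtain ⟨i, hii, hiB0⟩ := Hur.exists_unit_perp h0
  have hiψ0 : ∀ x : ℝ, (inner ℝ i (ψ0 x) : ℝ) = 0 := fun x =>
    hiB0 _ (LinearMap.mem_range_self ψ0 x)
  let φ1 : ℂ →ₗ[ℝ] A := (H.dbl ψ0 i).comp toC
  have hφ11 : φ1 1 = e := by
    show H.dbl ψ0 i (toC 1) = e
    rw [toC_one]
    exact H.dbl_one hψ01
  have hφ1m : ∀ z w : ℂ, φ1 (z * w) = mul (φ1 z) (φ1 w) := by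
    intro z w
    show H.dbl ψ0 i (toC (z * w)) = _
    rw [toC_mul]
    exact H.dbl_mul hψ01 hψ0m hψ0s hii hiψ0 (toC z) (toC w)
  have hφ1s : ∀ z : ℂ, H.conj (φ1 z) = φ1 (star z) := by
    intro z
    show H.conj (H.dbl ψ0 i (toC z)) = H.dbl ψ0 i (toC (star z))
    rw [toC_star]
    exact H.dbl_conj hψ01 hψ0s hiψ0 (toC z)
  have hφ1inj : Function.Injective φ1 :=
    (H.dbl_inj hψ01 hψ0m hψ0inj hii hiψ0).comp toC_inj
  by_cases h1 : LinearMap.range φ1 = ⊤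
  · exact Or.inr (Or.inl ⟨LinearEquiv.ofBijective φ1 ⟨hφ1inj, LinearMap.range_eq_top.mp h1⟩,
      hφ11, hφ1m⟩)
  -- Level 2 : ℍ
  obtain ⟨j, hjj, hjB1⟩ := Hur.exists_unit_perp h1
  have hjψ1 : ∀ x : ℂ, (inner ℝ j (φ1 x) : ℝ) = 0 := fun x =>
    hjB1 _ (LinearMap.mem_range_self φ1 x)
  let φ2 : Quaternion ℝ →ₗ[ℝ] A := (H.dbl φ1 j).comp toH
  have hφ21 : φ2 1 = e := by
    show H.dbl φ1 j (toH 1) = e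
    rw [toH_one]
    exact H.dbl_one hφ11
  have hφ2m : ∀ z w : Quaternion ℝ, φ2 (z * w) = mul (φ2 z) (φ2 w) := by
    intro z w
    show H.dbl φ1 j (toH (z * w)) = _
    rw [toH_mul]
    exact H.dbl_mul hφ11 hφ1m hφ1s hjj hjψ1 (toH z) (toH w)
  have hφ2s : ∀ z : Quaternion ℝ, H.conj (φ2 z) = φ2 (star z) := by
    intro z
    show H.conj (H.dbl φ1 j (toH z)) = H.dbl φ1 j (toH (star z))
    rw [toH_star]
    exact H.dbl_conj hφ11 hφ1s hjψ1 (toH z)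
  have hφ2inj : Function.Injective φ2 :=
    (H.dbl_inj hφ11 hφ1m hφ1inj hjj hjψ1).comp toH_inj
  by_cases h2 : LinearMap.range φ2 = ⊤
  · exact Or.inr (Or.inr (Or.inl
      ⟨LinearEquiv.ofBijective φ2 ⟨hφ2inj, LinearMap.range_eq_top.mp h2⟩, hφ21, hφ2m⟩))
  -- Level 3 : 𝕆
  obtain ⟨l, hll, hlB2⟩ := Hur.exists_unit_perp h2
  have hlψ2 : ∀ x : Quaternion ℝ, (inner ℝ l (φ2 x) : ℝ) = 0 := fun x =>
    hlB2 _ (LinearMap.mem_range_self φ2 x)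
  let φ3 : (Quaternion ℝ × Quaternion ℝ) →ₗ[ℝ] A := H.dbl φ2 l
  have hφ31 : φ3 ((1 : Quaternion ℝ), (0 : Quaternion ℝ)) = e := H.dbl_one hφ21
  have hφ3m : ∀ p q : Quaternion ℝ × Quaternion ℝ,
      φ3 (octMul p q) = mul (φ3 p) (φ3 q) := by
    intro p q
    exact H.dbl_mul hφ21 hφ2m hφ2s hll hlψ2 p q
  have hφ3inj : Function.Injective φ3 :=
    H.dbl_inj hφ21 hφ2m hφ2inj hll hlψ2
  by_cases h3 : LinearMap.range φ3 = ⊤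
  · exact Or.inr (Or.inr (Or.inr
      ⟨LinearEquiv.ofBijective φ3 ⟨hφ3inj, LinearMap.range_eq_top.mp h3⟩, hφ31, hφ3m⟩))
  -- Contradiction: there is no 16-dimensional normed division algebra
  exfalso
  obtain ⟨mu, hmu1, hmuB3⟩ := Hur.exists_unit_perp h3
  set B3 : Submodule ℝ A := LinearMap.range φ3 with hB3
  have heB3 : e ∈ B3 := ⟨((1 : Quaternion ℝ), (0 : Quaternion ℝ)), hφ31⟩
  have hmulB3 : ∀ {x y : A}, x ∈ B3 → y ∈ B3 → mul x y ∈ B3 := by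
    rintro x y ⟨p, rfl⟩ ⟨q, rfl⟩
    exact ⟨octMul p q, hφ3m p q⟩
  set qi : Quaternion ℝ := ⟨0, 1, 0, 0⟩ with hqi
  set qj : Quaternion ℝ := ⟨0, 0, 1, 0⟩ with hqj
  have hqji : qj * qi = -(qi * qj) := by
    rw [Quaternion.ext_iff]
    simp [Quaternion.re_mul, Quaternion.imI_mul, Quaternion.imJ_mul, Quaternion.imK_mul]
    simp [hqi, hqj]
  have hkne : qi * qj ≠ 0 := by
    rw [Ne, Quaternion.ext_iff]
    simp [Quaternion.re_mul, Quaternion.imI_mul, Quaternion.imJ_mul, Quaternion.imK_mul]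
    simp [hqi, hqj, Quaternion.re_zero, Quaternion.imI_zero,
      Quaternion.imJ_zero, Quaternion.imK_zero]
  set aA : A := φ2 qi with haA
  set bA : A := φ2 qj with hbA
  have hle : (inner ℝ l e : ℝ) = 0 := by rw [← hφ21]; exact hlψ2 1
  have haB3 : aA ∈ B3 := ⟨(qi, 0), H.dbl_fst qi⟩
  have hbB3 : bA ∈ B3 := ⟨(qj, 0), H.dbl_fst qj⟩
  have hlB3 : l ∈ B3 := by
    refine ⟨((0 : Quaternion ℝ), (1 : Quaternion ℝ)), ?_⟩
    show φ2 0 + mul (φ2 1) l = l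
    rw [map_zero, hφ21, h_one_mul, zero_add]
  have hR1 : mul aA (mul bA l) = mul (mul bA aA) l := by
    have := H.R1 (i := l) hle (hlψ2 qi) (hlψ2 qj) (by rw [← hφ2m]; exact hlψ2 (qj * qi))
    exact this
  set X : A := mul aA (mul bA l) - mul (mul aA bA) l with hX
  have hXB3 : X ∈ B3 :=
    Submodule.sub_mem _ (hmulB3 haB3 (hmulB3 hbB3 hlB3)) (hmulB3 (hmulB3 haB3 hbB3) hlB3)
  have hXzero : X = 0 := by
    have hc := H.cross heB3 (fun hx hy => hmulB3 hx hy) hmu1 hmuB3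
      (a := bA) (b := X) (c := l) (d := aA) hbB3 hXB3 hlB3 haB3
    rw [← hX] at hc
    exact inner_self_eq_zero.mp hc
  have hX2 : X = -(2 : ℝ) • mul (φ2 (qi * qj)) l := by
    rw [hX, hR1, ← hφ2m, ← hφ2m, hqji, map_neg, map_neg, LinearMap.neg_apply]
    module
  have hne2 : mul (φ2 (qi * qj)) l ≠ 0 := by
    intro hzero
    have h5 := hq (φ2 (qi * qj)) l
    rw [hzero, inner_zero_left, hll, mul_one] at h5
    have h6 : φ2 (qi * qj) = 0 := inner_self_eq_zero.mp h5.symm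
    exact hkne (hφ2inj (by rw [h6, map_zero]))
  apply hne2
  have : (-(2 : ℝ)) • mul (φ2 (qi * qj)) l = 0 := by rw [← hX2]; exact hXzero
  rcases smul_eq_zero.mp this with h | h
  · norm_num at h
  · exact h
end
end

section
/- Zero divisors in a composition algebra are precisely the elements of norm zero: let A be a composition algebra over a field K of characteristic ≠ 2 with quadratic form Q, and let x ∈ A be nonzero. Then there exists a nonzero y ∈ A with x*y = 0 if and only if Q(x) = 0, and likewise there exists a nonzero y ∈ A with y*x = 0 if and only if Q(x) = 0. -/
noncomputable section

/-- Zero divisors in a composition algebra are precisely the elements of norm zero: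
for a nonzero `x`, there is a nonzero `y` with `x * y = 0` iff `Q x = 0`, and likewise
there is a nonzero `y` with `y * x = 0` iff `Q x = 0`. -/
theorem zero_divisors_iff_norm_zero
    (K : Type*) [Field K] (h2 : (2 : K) ≠ 0)
    (A : Type*) [NonAssocRing A] [Module K A] [IsScalarTower K A A] [SMulCommClass K A A]
    [Nontrivial A] [FiniteDimensional K A]
    (Q : QuadraticForm K A)
    (hmul : ∀ x y : A, Q (x * y) = Q x * Q y)
    (hnd : ∀ x : A, (∀ y : A, (Q (x + y) - Q x - Q y) / 2 = 0) → x = 0)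
    (x : A) (hx : x ≠ 0) :
    ((∃ y : A, y ≠ 0 ∧ x * y = 0) ↔ Q x = 0) ∧
    ((∃ y : A, y ≠ 0 ∧ y * x = 0) ↔ Q x = 0) := by
  set B : A → A → K := fun u v => (Q (u + v) - Q u - Q v) / 2 with hBdef
  have hQ0 : Q 0 = 0 := QuadraticMap.map_zero Q
  have hBz : ∀ w : A, B 0 w = 0 := by
    intro w; simp [hBdef, hQ0]
  have hmulL : ∀ a y z : A, B (a * y) (a * z) = Q a * B y z := by
    intro a y z
    have h1 : a * y + a * z = a * (y + z) := (mul_add a y z).symm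
    simp only [hBdef, h1, hmul]
    ring
  have hmulR : ∀ a y z : A, B (y * a) (z * a) = Q a * B y z := by
    intro a y z
    have h1 : y * a + z * a = (y + z) * a := (add_mul y z a).symm
    simp only [hBdef, h1, hmul]
    ring
  -- general backward direction for a linear map whose image is totally isotropic
  have bwd : ∀ f : A →ₗ[K] A, (∀ y z : A, B (f y) (f z) = 0) → ∃ y : A, y ≠ 0 ∧ f y = 0 := by
    intro f hf
    by_contra hcon
    push_neg at hcon
    have hker : LinearMap.ker f = ⊥ := by
      rw [LinearMap.ker_eq_bot']
      intro m hm
      by_contra hm0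
      exact hcon m hm0 hm
    have hinj : Function.Injective f := LinearMap.ker_eq_bot.mp hker
    have hsurj : Function.Surjective f := (LinearMap.injective_iff_surjective).mp hinj
    obtain ⟨a, ha⟩ := exists_ne (0 : A)
    apply ha
    apply hnd
    intro v
    obtain ⟨y, rfl⟩ := hsurj a
    obtain ⟨z, rfl⟩ := hsurj v
    exact hf y z
  constructor
  · constructor
    · rintro ⟨y, hy, hxy⟩
      by_contra hQx
      apply hy
      apply hnd
      intro z
      have h := hmulL x y z
      rw [hxy, hBz] at h
      exact (mul_eq_zero.mp h.symm).resolve_left hQx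
    · intro hQx
      obtain ⟨y, hy, hfy⟩ := bwd (LinearMap.mulLeft K x) (by
        intro y z
        simp only [LinearMap.mulLeft_apply]
        rw [hmulL, hQx, zero_mul])
      exact ⟨y, hy, by simpa using hfy⟩
  · constructor
    · rintro ⟨y, hy, hxy⟩
      by_contra hQx
      apply hy
      apply hnd
      intro z
      have h := hmulR x y z
      rw [hxy, hBz] at h
      exact (mul_eq_zero.mp h.symm).resolve_left hQx
    · intro hQx
      obtain ⟨y, hy, hfy⟩ := bwd (LinearMap.mulRight K x) (by
        intro y z
        simp only [LinearMap.mulRight_apply]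
        rw [hmulR, hQx, zero_mul])
      exact ⟨y, hy, by simpa using hfy⟩
end
end

section
/- Kernel of left multiplication by an imaginary zero divisor: let A be a composition algebra over a field K of characteristic ≠ 2, with quadratic form Q, bilinear form B and imaginary part Im A = {y ∈ A | B(y,1) = 0}. Let x ∈ Im A be nonzero with Q(x) = 0, and set K_x := {y ∈ Im A | x*y = 0}. Then x ∈ K_x; Q(y) = 0 for every y ∈ K_x; K_x = {x*z | z ∈ A} ∩ Im A; and the K-subspace K_x has dimension (Module.finrank K A)/2 − 1. -/
noncomputable section

/-- Kernel of left multiplication by an imaginary zero divisor `x` in a composition algebra: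
`K_x = {y ∈ Im A | x * y = 0}` contains `x`, is isotropic, equals `x·A ∩ Im A`, and has
dimension `(dim A) / 2 - 1`.  Here `Im A = {y | B y 1 = 0}` with
`B y z = (Q (y + z) - Q y - Q z) / 2`. -/
theorem ker_leftMul_imaginary_zero_divisor
    (K : Type*) [Field K] (h2 : (2 : K) ≠ 0)
    (A : Type*) [NonAssocRing A] [Module K A] [IsScalarTower K A A] [SMulCommClass K A A]
    [Nontrivial A] [FiniteDimensional K A]
    (Q : QuadraticForm K A)
    (hmul : ∀ x y : A, Q (x * y) = Q x * Q y)
    (hnd : ∀ x : A, (∀ y : A, (Q (x + y) - Q x - Q y) / 2 = 0) → x = 0)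
    (x : A) (hx : x ≠ 0) (hQx : Q x = 0)
    (hxIm : (Q (x + 1) - Q x - Q 1) / 2 = 0) :
    x ∈ {y : A | (Q (y + 1) - Q y - Q 1) / 2 = 0 ∧ x * y = 0} ∧
    (∀ y ∈ {y : A | (Q (y + 1) - Q y - Q 1) / 2 = 0 ∧ x * y = 0}, Q y = 0) ∧
    {y : A | (Q (y + 1) - Q y - Q 1) / 2 = 0 ∧ x * y = 0} =
      {w : A | ∃ z : A, w = x * z} ∩ {y : A | (Q (y + 1) - Q y - Q 1) / 2 = 0} ∧
    Set.finrank K {y : A | (Q (y + 1) - Q y - Q 1) / 2 = 0 ∧ x * y = 0} =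
      Module.finrank K A / 2 - 1 := by
  classical
  set p : A → A → K := QuadraticMap.polar Q with hpdef
  -- basic translation
  have hhalf : ∀ a b : A, (Q (a + b) - Q a - Q b) / 2 = 0 ↔ p a b = 0 := by
    intro a b
    rw [div_eq_zero_iff]
    simp [hpdef, QuadraticMap.polar, h2]
  have hnd' : ∀ a : A, (∀ y : A, p a y = 0) → a = 0 := by
    intro a ha
    exact hnd a fun y => (hhalf a y).2 (ha y)
  -- identities
  have hP2a : ∀ a b c : A, p (a * b) (a * c) = Q a * p b c := by
    intro a b c
    simp only [hpdef, QuadraticMap.polar, ← mul_add, hmul]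
    ring
  have hP2b : ∀ a b c : A, p (a * c) (b * c) = p a b * Q c := by
    intro a b c
    simp only [hpdef, QuadraticMap.polar, ← add_mul, hmul]
    ring
  -- Q 1 = 1
  have hQ1 : Q 1 = 1 := by
    have h11 : Q 1 = Q 1 * Q 1 := by rw [← hmul 1 1, one_mul]
    rcases mul_eq_zero.mp (show Q 1 * (Q 1 - 1) = 0 by linear_combination -h11) with h | h
    · exfalso
      have hall : ∀ y : A, Q y = 0 := fun y => by
        have := hmul 1 y; rwa [one_mul, h, zero_mul] at this
      have : (1 : A) = 0 := hnd' 1 fun y => by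
        simp [hpdef, QuadraticMap.polar, hall]
      exact one_ne_zero this
    · linear_combination h
  -- the fundamental linearized identity
  have hP3 : ∀ a b c : A, p (a * b) c + p b (a * c) = p a 1 * p b c := by
    intro a b c
    have h := hP2a (a + 1) b c
    rw [add_mul, add_mul, one_mul, one_mul] at h
    rw [hpdef] at h
    rw [QuadraticMap.polar_add_left, QuadraticMap.polar_add_right,
      QuadraticMap.polar_add_right] at h
    have e1 := hP2a a b c
    have hQa1 : Q (a + 1) = Q a + Q 1 + p a 1 := by
      simp only [hpdef, QuadraticMap.polar]; ring
    rw [hpdef] at e1 ⊢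
    rw [hQa1, hQ1] at h
    linear_combination h - e1
  have hx1 : p x 1 = 0 := (hhalf x 1).1 hxIm
  have hadj : ∀ b c : A, p (x * b) c = - p b (x * c) := by
    intro b c
    have := hP3 x b c
    rw [hx1, zero_mul] at this
    linear_combination this
  -- x * x = 0
  have hxsq : x * x = 0 := by
    apply hnd'
    intro y
    have h := hP3 x x y
    have h2' : p x (x * y) = 0 := by
      have := hP2a x 1 y
      rw [mul_one, hQx, zero_mul] at this
      exact this
    rw [hx1, zero_mul, h2'] at h
    linear_combination h
  -- L_x ∘ L_x = 0
  have hLL : ∀ y : A, x * (x * y) = 0 := by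
    intro y
    apply hnd'
    intro w
    rw [hadj (x * y) w, hP2a x y w, hQx, zero_mul, neg_zero]
  -- zero divisors are isotropic
  have hiso : ∀ y : A, x * y = 0 → Q y = 0 := by
    intro y hy
    by_contra hQy
    apply hx
    apply hnd' x
    intro z
    have h := hP2b x z y
    rw [hy] at h
    have h0 : p (0 : A) (z * y) = 0 := by
      simp [hpdef, QuadraticMap.polar]
    rw [h0] at h
    exact (mul_eq_zero.mp h.symm).resolve_right hQy
  -- linear algebra setup
  set L : A →ₗ[K] A := LinearMap.mulLeft K x with hLdef
  have hLapp : ∀ y : A, L y = x * y := fun y => rfl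
  set W : Submodule K A := LinearMap.ker L with hWdef
  have hmemW : ∀ y : A, y ∈ W ↔ x * y = 0 := fun y => LinearMap.mem_ker
  have hrange_le : LinearMap.range L ≤ W := by
    rintro _ ⟨y, rfl⟩
    exact (hmemW _).2 (hLL y)
  set B : LinearMap.BilinForm K A := QuadraticMap.polarBilin Q with hBdef
  have hBapp : ∀ a b : A, B a b = p a b := fun a b => rfl
  have hBnd : B.Nondegenerate := ⟨fun a ha => hnd' a fun y => by rw [← hBapp]; exact ha y,
    fun a ha => hnd' a fun y => by rw [hpdef, QuadraticMap.polar_comm, ← hpdef, ← hBapp]; exact ha y⟩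
  have hBrefl : B.IsRefl := by
    intro a b h
    rw [hBapp] at h ⊢
    rw [hpdef] at h ⊢
    rw [QuadraticMap.polar_comm]
    exact h
  have hWiso : W ≤ B.orthogonal W := by
    intro y hy
    rw [LinearMap.BilinForm.mem_orthogonal_iff]
    intro z hz
    have hzy : x * (z + y) = 0 := by
      rw [mul_add, (hmemW z).1 hz, (hmemW y).1 hy, add_zero]
    show B z y = 0
    rw [hBapp, hpdef]
    show Q (z + y) - Q z - Q y = 0
    rw [hiso _ hzy, hiso _ ((hmemW z).1 hz), hiso _ ((hmemW y).1 hy)]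
    ring
  have hrn : Module.finrank K (LinearMap.range L) + Module.finrank K W
      = Module.finrank K A := LinearMap.finrank_range_add_finrank_ker L
  have hrlek : Module.finrank K (LinearMap.range L) ≤ Module.finrank K W :=
    Submodule.finrank_mono hrange_le
  have horth : Module.finrank K (B.orthogonal W)
      = Module.finrank K A - Module.finrank K W :=
    LinearMap.BilinForm.finrank_orthogonal hBnd W
  have hklenk : Module.finrank K W ≤ Module.finrank K A - Module.finrank K W := by
    rw [← horth]; exact Submodule.finrank_mono hWiso
  have hn2k : Module.finrank K A = 2 * Module.finrank K W := by omega
  have hrk : LinearMap.range L = W :=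
    Submodule.eq_of_le_of_finrank_le hrange_le (by omega)
  have hker_iff : ∀ y : A, x * y = 0 ↔ ∃ z : A, y = x * z := by
    intro y
    constructor
    · intro hy
      have : y ∈ LinearMap.range L := by rw [hrk]; exact (hmemW y).2 hy
      obtain ⟨z, hz⟩ := this
      exact ⟨z, hz.symm⟩
    · rintro ⟨z, rfl⟩
      exact hLL z
  -- the linear functional y ↦ p y 1
  set f : A →ₗ[K] K := B.flip 1 with hfdef
  have hfapp : ∀ y : A, f y = p y 1 := fun y => rfl
  have hfW : ∃ y ∈ W, f y ≠ 0 := by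
    by_contra hcon
    push_neg at hcon
    apply hx
    apply hnd' x
    intro z
    have h1' : x * z ∈ W := (hmemW _).2 (hLL z)
    have hz0 := hcon _ h1'
    rw [hfapp] at hz0
    have h2' := hadj z 1
    rw [mul_one] at h2'
    rw [hpdef, QuadraticMap.polar_comm]
    show p z x = 0
    linear_combination h2' - hz0
  set f' : W →ₗ[K] K := f.comp W.subtype with hf'def
  have hrange_f' : LinearMap.range f' = ⊤ := by
    obtain ⟨y, hyW, hyf⟩ := hfW
    rw [eq_top_iff]
    intro c _
    refine ⟨(c / f y) • ⟨y, hyW⟩, ?_⟩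
    have : f' ((c / f y) • ⟨y, hyW⟩) = (c / f y) * f y := by
      rw [map_smul]
      simp [hf'def, smul_eq_mul]
    rw [this, div_mul_cancel₀ c hyf]
  have hrnf : Module.finrank K (LinearMap.range f') + Module.finrank K (LinearMap.ker f')
      = Module.finrank K W := LinearMap.finrank_range_add_finrank_ker f'
  have hrange_f'_rank : Module.finrank K (LinearMap.range f') = 1 := by
    rw [hrange_f', finrank_top, Module.finrank_self]
  have hkerf'_rank : Module.finrank K (LinearMap.ker f')
      = Module.finrank K W - 1 := by omega
  have hcomap : LinearMap.ker f' = Submodule.comap W.subtype (LinearMap.ker f) :=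
    LinearMap.ker_comp _ _
  have hfin : Module.finrank K ((W ⊓ LinearMap.ker f : Submodule K A))
      = Module.finrank K W - 1 := by
    have hmc : Submodule.map W.subtype (Submodule.comap W.subtype (LinearMap.ker f))
        = W ⊓ LinearMap.ker f := Submodule.map_comap_subtype _ _
    rw [← hmc, Submodule.finrank_map_subtype_eq, ← hcomap]
    exact hkerf'_rank
  refine ⟨⟨hxIm, hxsq⟩, fun y hy => hiso y hy.2, ?_, ?_⟩
  · ext y
    simp only [Set.mem_setOf_eq, Set.mem_inter_iff]
    rw [hker_iff y]
    tauto
  · have hSet : {y : A | (Q (y + 1) - Q y - Q 1) / 2 = 0 ∧ x * y = 0}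
        = ↑(W ⊓ LinearMap.ker f : Submodule K A) := by
      ext y
      simp only [Set.mem_setOf_eq, SetLike.mem_coe, Submodule.mem_inf, LinearMap.mem_ker]
      rw [hhalf, hmemW, ← hfapp]
      tauto
    rw [Set.finrank, hSet, Submodule.span_eq, hfin]
    omega
end
end

section
/- Cross product from a normed division algebra: let A be a Euclidean Hurwitz algebra and let V = (ℝ ∙ 1)ᗮ ⊆ A be the orthogonal complement of the unit (the imaginary part). For x, y ∈ V define x × y := x*y − ⟪x*y, 1⟫ • 1 (the imaginary part of the product x*y). Then: x × y ∈ V for all x, y ∈ V; the trilinear map (x,y,z) ↦ ⟪x × y, z⟫ on V is alternating (it vanishes whenever two of its arguments coincide); and ‖x × y‖² = ‖x‖²·‖y‖² − ⟪x,y⟫² for all x, y ∈ V. Hence × is a vector cross product on V. -/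
noncomputable section

open RealInnerProductSpace

/-- Cross product from a normed division algebra: in a Euclidean Hurwitz algebra — a
finite-dimensional real inner product space `A`, nontrivial, with bilinear unital
multiplication `mul` (unit `e`) whose norm is multiplicative — the imaginary part
`V = (ℝ ∙ e)ᗮ` carries the vector cross product `x × y = Im (mul x y)
= mul x y - ⟪mul x y, e⟫ • e`:  it takes values in `V`, the form `(x,y,z) ↦ ⟪x × y, z⟫`
is alternating, and `‖x × y‖² = ‖x‖² ‖y‖² - ⟪x, y⟫²`. -/
theorem cross_product_from_hurwitz_algebra
    (A : Type*) [NormedAddCommGroup A] [InnerProductSpace ℝ A]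
    [FiniteDimensional ℝ A] [Nontrivial A]
    (mul : A →ₗ[ℝ] A →ₗ[ℝ] A) (e : A)
    (h_one_mul : ∀ x, mul e x = x) (h_mul_one : ∀ x, mul x e = x)
    (hnorm : ∀ x y, ‖mul x y‖ = ‖x‖ * ‖y‖) :
    ∀ x ∈ (Submodule.span ℝ {e})ᗮ, ∀ y ∈ (Submodule.span ℝ {e})ᗮ,
      (mul x y - ⟪mul x y, e⟫ • e) ∈ (Submodule.span ℝ {e})ᗮ ∧
      (∀ z ∈ (Submodule.span ℝ {e})ᗮ, ⟪mul x x - ⟪mul x x, e⟫ • e, z⟫ = 0) ∧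
      ⟪mul x y - ⟪mul x y, e⟫ • e, x⟫ = 0 ∧
      ⟪mul x y - ⟪mul x y, e⟫ • e, y⟫ = 0 ∧
      ‖mul x y - ⟪mul x y, e⟫ • e‖ ^ 2 = ‖x‖ ^ 2 * ‖y‖ ^ 2 - ⟪x, y⟫ ^ 2 := by
  -- e is nonzero, and has norm 1
  have he0 : e ≠ 0 := by
    intro h
    obtain ⟨a, b, hab⟩ := exists_pair_ne A
    apply hab
    have ha := h_one_mul a
    have hb := h_one_mul b
    rw [h] at ha hb
    simp at ha hb
    rw [← ha, ← hb]
  have he1 : ‖e‖ = 1 := by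
    have h := hnorm e e
    rw [h_mul_one] at h
    have hne : ‖e‖ ≠ 0 := norm_ne_zero_iff.mpr he0
    have h' : ‖e‖ * ‖e‖ = ‖e‖ * 1 := by linarith
    exact mul_left_cancel₀ hne h'
  -- Polarization in the second variable
  have P1 : ∀ x a b : A, ⟪mul x a, mul x b⟫ = ‖x‖ ^ 2 * ⟪a, b⟫ := by
    intro x a b
    have h1 := norm_add_sq_real (mul x a) (mul x b)
    have h2 := norm_add_sq_real a b
    have hadd : mul x a + mul x b = mul x (a + b) := by rw [map_add]
    rw [hadd, hnorm] at h1
    have h3 := hnorm x a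
    have h4 := hnorm x b
    rw [h3, h4] at h1
    linear_combination (-h1 + ‖x‖ ^ 2 * h2) / 2
  -- Polarization in the first variable
  have P2 : ∀ a b x : A, ⟪mul a x, mul b x⟫ = ⟪a, b⟫ * ‖x‖ ^ 2 := by
    intro a b x
    have h1 := norm_add_sq_real (mul a x) (mul b x)
    have h2 := norm_add_sq_real a b
    have hadd : mul a x + mul b x = mul (a + b) x := by rw [map_add, LinearMap.add_apply]
    rw [hadd, hnorm] at h1
    have h3 := hnorm a x
    have h4 := hnorm b x
    rw [h3, h4] at h1
    linear_combination (-h1 + ‖x‖ ^ 2 * h2) / 2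
  -- Full polarization
  have P3 : ∀ x u a b : A,
      ⟪mul x a, mul u b⟫ + ⟪mul u a, mul x b⟫ = 2 * ⟪x, u⟫ * ⟪a, b⟫ := by
    intro x u a b
    have h1 := P1 (x + u) a b
    have h2 := P1 x a b
    have h3 := P1 u a b
    have hxa : mul (x + u) a = mul x a + mul u a := by rw [map_add, LinearMap.add_apply]
    have hxb : mul (x + u) b = mul x b + mul u b := by rw [map_add, LinearMap.add_apply]
    rw [hxa, hxb, inner_add_left, inner_add_right, inner_add_right,
      norm_add_sq_real] at h1
    linarith
  intro x hx y hy
  have hxe : ⟪x, e⟫ = 0 := by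
    rw [real_inner_comm]
    exact (Submodule.mem_orthogonal_singleton_iff_inner_right).mp hx
  have hye : ⟪y, e⟫ = 0 := by
    rw [real_inner_comm]
    exact (Submodule.mem_orthogonal_singleton_iff_inner_right).mp hy
  have hee : ⟪e, e⟫ = (1 : ℝ) := by
    rw [real_inner_self_eq_norm_sq, he1]; norm_num
  -- key: ⟪mul x y, e⟫ = -⟪x, y⟫
  have key : ⟪mul x y, e⟫ = -⟪x, y⟫ := by
    have h := P3 x e y e
    simp only [h_one_mul, h_mul_one] at h
    have hcomm : ⟪y, x⟫ = ⟪x, y⟫ := real_inner_comm x y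
    rw [hcomm, hxe, hye] at h
    linarith
  refine ⟨?_, ?_, ?_, ?_, ?_⟩
  · -- membership in the orthogonal complement
    rw [Submodule.mem_orthogonal_singleton_iff_inner_right]
    rw [inner_sub_right, inner_smul_right, hee, real_inner_comm]
    ring
  · -- alternating: ⟪x × x, z⟫ = 0 for z ∈ V
    intro z hz
    have hez : ⟪e, z⟫ = 0 :=
      (Submodule.mem_orthogonal_singleton_iff_inner_right).mp hz
    rw [inner_sub_left, real_inner_smul_left]
    have h1 := P3 x z x e
    simp only [h_one_mul, h_mul_one] at h1
    have h2 : ⟪mul z x, x⟫ = 0 := by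
      have h := P2 z e x
      rw [h_one_mul] at h
      rw [h, real_inner_comm e z, hez]
      ring
    have h3 : ⟪mul x x, z⟫ = 0 := by
      linear_combination h1 - h2 + 2 * ⟪x, z⟫ * hxe
    rw [h3, hez]; ring
  · -- ⟪x × y, x⟫ = 0
    rw [inner_sub_left, real_inner_smul_left]
    have h1 : ⟪mul x y, x⟫ = 0 := by
      have h := P1 x y e
      rw [h_mul_one, hye] at h
      rw [h]; ring
    rw [h1, real_inner_comm x e, hxe]; ring
  · -- ⟪x × y, y⟫ = 0
    rw [inner_sub_left, real_inner_smul_left]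
    have h1 : ⟪mul x y, y⟫ = 0 := by
      have h := P2 x e y
      rw [h_one_mul, hxe] at h
      rw [h]; ring
    rw [h1, real_inner_comm y e, hye]; ring
  · -- norm identity
    rw [key]
    have h1 := norm_sub_sq_real (mul x y) ((-⟪x, y⟫) • e)
    rw [real_inner_smul_right, norm_smul, key, he1, Real.norm_eq_abs, abs_neg] at h1
    have h2 : ‖mul x y‖ ^ 2 = ‖x‖ ^ 2 * ‖y‖ ^ 2 := by rw [hnorm]; ring
    have habs : |⟪x, y⟫| ^ 2 = ⟪x, y⟫ ^ 2 := sq_abs _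
    rw [h1]
    linear_combination h2 + habs
end
end

section
/- Normed algebra from a cross product: let (V, ⟪·,·⟫) be a real inner product space equipped with a vector cross product ×. On A = ℝ × V define the product (s,u)·(t,v) := (s·t − ⟪u,v⟫, s • v + t • u + u × v) and the quadratic norm N(s,u) := s² + ‖u‖². Then N is multiplicative: N((s,u)·(t,v)) = N(s,u)·N(t,v) for all s, t ∈ ℝ and u, v ∈ V. -/
noncomputable section

open RealInnerProductSpace

/-- Normed algebra from a cross product: if `(V, ⟪·,·⟫)` is a real inner product space with
a vector cross product `×` (bilinear, with `(u,v,w) ↦ ⟪u × v, w⟫` alternating and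
`‖u × v‖² = ‖u‖²‖v‖² - ⟪u,v⟫²`), then the quadratic norm `N (s, u) = s² + ‖u‖²` on
`ℝ × V` is multiplicative for the product
`(s,u)·(t,v) = (s t - ⟪u,v⟫, s • v + t • u + u × v)`. -/
theorem normed_algebra_from_cross_product
    (V : Type*) [NormedAddCommGroup V] [InnerProductSpace ℝ V]
    (cross : V →ₗ[ℝ] V →ₗ[ℝ] V)
    (halt : ∀ u v : V, ⟪cross u u, v⟫ = 0 ∧ ⟪cross u v, u⟫ = 0 ∧ ⟪cross u v, v⟫ = 0)
    (hmag : ∀ u v : V, ‖cross u v‖ ^ 2 = ‖u‖ ^ 2 * ‖v‖ ^ 2 - ⟪u, v⟫ ^ 2) :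
    ∀ (s t : ℝ) (u v : V),
      (s * t - ⟪u, v⟫) ^ 2 + ‖s • v + t • u + cross u v‖ ^ 2 =
        (s ^ 2 + ‖u‖ ^ 2) * (t ^ 2 + ‖v‖ ^ 2) := by
  intro s t u v
  obtain ⟨-, h2, h3⟩ := halt u v
  have hw1 : ⟪u, cross u v⟫ = 0 := by rw [real_inner_comm]; exact h2
  have hw2 : ⟪v, cross u v⟫ = 0 := by rw [real_inner_comm]; exact h3
  have key : ‖s • v + t • u + cross u v‖ ^ 2 =
      s ^ 2 * ‖v‖ ^ 2 + 2 * (s * t) * ⟪u, v⟫ + t ^ 2 * ‖u‖ ^ 2 + ‖cross u v‖ ^ 2 := by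
    rw [norm_add_sq_real, norm_add_sq_real]
    simp [inner_smul_left, inner_smul_right, inner_add_left, norm_smul, hw1, hw2,
      real_inner_comm v u, mul_pow, real_inner_self_eq_norm_sq]
    ring
  rw [key, hmag]
  ring
end
end

section
/- The automorphism group of the complexified quaternions is SO₃(ℂ): there is a group isomorphism between the group of ℂ-algebra automorphisms of Quaternion ℂ and the special orthogonal group of 3×3 complex matrices, i.e. (Quaternion ℂ ≃ₐ[ℂ] Quaternion ℂ) ≃* Matrix.specialOrthogonalGroup (Fin 3) ℂ. -/
noncomputable section
open Matrix Quaternion QuaternionAlgebra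

/-- The special orthogonal group of 3×3 complex matrices: matrices `g` with
`gᵀ * g = 1` and `det g = 1`, as a submonoid of the matrix ring. -/
def SO3C : Submonoid (Matrix (Fin 3) (Fin 3) ℂ) where
  carrier := {g | g.transpose * g = 1 ∧ g.det = 1}
  mul_mem' := fun {a b} ha hb =>
    ⟨by rw [Matrix.transpose_mul, mul_assoc, ← mul_assoc a.transpose, ha.1, one_mul, hb.1],
     by rw [Matrix.det_mul, ha.2, hb.2, one_mul]⟩
  one_mem' := ⟨by rw [Matrix.transpose_one, one_mul], Matrix.det_one⟩


def qv (v : Fin 3 → ℂ) : Quaternion ℂ := ⟨0, v 0, v 1, v 2⟩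

@[simp] lemma qv_re' (v : Fin 3 → ℂ) : (qv v).re = 0 := rfl
@[simp] lemma qv_imI (v : Fin 3 → ℂ) : (qv v).imI = v 0 := rfl
@[simp] lemma qv_imJ (v : Fin 3 → ℂ) : (qv v).imJ = v 1 := rfl
@[simp] lemma qv_imK (v : Fin 3 → ℂ) : (qv v).imK = v 2 := rfl

def mkQ (a b c d : ℂ) : Quaternion ℂ := ⟨a, b, c, d⟩

@[simp] lemma mk_eq_mkQ (a b c d : ℂ) : (⟨a, b, c, d⟩ : ℍ[ℂ,-1,0,-1]) = mkQ a b c d := rfl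
@[simp] lemma mkQ_re (a b c d : ℂ) : (mkQ a b c d).re = a := rfl
@[simp] lemma mkQ_imI (a b c d : ℂ) : (mkQ a b c d).imI = b := rfl
@[simp] lemma mkQ_imJ (a b c d : ℂ) : (mkQ a b c d).imJ = c := rfl
@[simp] lemma mkQ_imK (a b c d : ℂ) : (mkQ a b c d).imK = d := rfl

lemma qv_mul (v w : Fin 3 → ℂ) :
    qv v * qv w = ⟨-(v ⬝ᵥ w), (v ⨯₃ w) 0, (v ⨯₃ w) 1, (v ⨯₃ w) 2⟩ := by
  ext <;> simp [cross_apply, dotProduct, Fin.sum_univ_three] <;> ring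

lemma qv_inj {v w : Fin 3 → ℂ} (h : qv v = qv w) : v = w := by
  funext r; fin_cases r
  · exact congrArg QuaternionAlgebra.imI h
  · exact congrArg QuaternionAlgebra.imJ h
  · exact congrArg QuaternionAlgebra.imK h

lemma qv_add (v w : Fin 3 → ℂ) : qv (v + w) = qv v + qv w := by
  ext <;> simp

lemma qv_smul (a : ℂ) (v : Fin 3 → ℂ) : qv (a • v) = a • qv v := by
  ext <;> simp

lemma qv_re (v : Fin 3 → ℂ) : (qv v).re = 0 := rfl

/-- columns of a matrix -/
def col3 (g : Matrix (Fin 3) (Fin 3) ℂ) (l : Fin 3) : Fin 3 → ℂ := fun r => g r l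

lemma col_dot {g : Matrix (Fin 3) (Fin 3) ℂ} (hg : gᵀ * g = 1) (l m : Fin 3) :
    col3 g l ⬝ᵥ col3 g m = (1 : Matrix (Fin 3) (Fin 3) ℂ) l m := by
  rw [← hg]
  simp [col3, Matrix.mul_apply, dotProduct, Matrix.transpose_apply]

lemma cross_cols {g : Matrix (Fin 3) (Fin 3) ℂ} (hg : g ∈ SO3C) :
    col3 g 0 ⨯₃ col3 g 1 = col3 g 2 := by
  have h1 : g * gᵀ = 1 := mul_eq_one_comm.mp hg.1
  have hadj : g.adjugate = gᵀ := by
    calc g.adjugate = g.adjugate * (g * gᵀ) := by rw [h1, mul_one]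
    _ = (g.adjugate * g) * gᵀ := by rw [mul_assoc]
    _ = gᵀ := by rw [Matrix.adjugate_mul, hg.2, one_smul, one_mul]
  rw [Matrix.adjugate_fin_three] at hadj
  have h0 := congrFun (congrFun hadj 2) 0
  have h1' := congrFun (congrFun hadj 2) 1
  have h2 := congrFun (congrFun hadj 2) 2
  simp [Matrix.transpose_apply] at h0 h1' h2
  funext r
  fin_cases r
  · simp [cross_apply, col3]; linear_combination h0
  · simp [cross_apply, col3]; linear_combination h1'
  · simp [cross_apply, col3]; linear_combination h2

lemma transpose_mem {g : Matrix (Fin 3) (Fin 3) ℂ} (hg : g ∈ SO3C) : gᵀ ∈ SO3C :=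
  ⟨by rw [Matrix.transpose_transpose]; exact mul_eq_one_comm.mp hg.1,
   by rw [Matrix.det_transpose]; exact hg.2⟩

/-- quaternionic basis attached to an orthogonal matrix -/
def so3Basis (g : Matrix (Fin 3) (Fin 3) ℂ) (hg : gᵀ * g = 1) :
    QuaternionAlgebra.Basis (Quaternion ℂ) (-1 : ℂ) (0 : ℂ) (-1 : ℂ) where
  i := qv (col3 g 0)
  j := qv (col3 g 1)
  k := qv (col3 g 0) * qv (col3 g 1)
  i_mul_i := by
    rw [qv_mul, col_dot hg]
    ext <;> simp [cross_apply]
  j_mul_j := by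
    rw [qv_mul, col_dot hg]
    ext <;> simp [cross_apply]
  i_mul_j := rfl
  j_mul_i := by
    rw [qv_mul, qv_mul, col_dot hg, col_dot hg]
    ext <;> simp [cross_apply] <;> ring

def Φhom (g : Matrix (Fin 3) (Fin 3) ℂ) (hg : g ∈ SO3C) : Quaternion ℂ →ₐ[ℂ] Quaternion ℂ :=
  (so3Basis g hg.1).liftHom

lemma Φhom_qv {g : Matrix (Fin 3) (Fin 3) ℂ} (hg : g ∈ SO3C) (v : Fin 3 → ℂ) :
    Φhom g hg (qv v) = qv (g *ᵥ v) := by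
  have hk : qv (col3 g 0) * qv (col3 g 1) = qv (col3 g 2) := by
    rw [qv_mul, col_dot hg.1, cross_cols hg]
    ext <;> simp
  have hv : g *ᵥ v = v 0 • col3 g 0 + (v 1 • col3 g 1 + v 2 • col3 g 2) := by
    funext r
    simp [Matrix.mulVec, dotProduct, Fin.sum_univ_three, col3]
    ring
  rw [Φhom]
  show (so3Basis g hg.1).lift (qv v) = qv (g *ᵥ v)
  unfold QuaternionAlgebra.Basis.lift
  simp only [so3Basis, hk, qv_re, map_zero, zero_add, hv, qv_add, qv_smul]
  show v 0 • _ + v 1 • _ + v 2 • _ = _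
  exact add_assoc _ _ _

lemma mulVec_single3 (g : Matrix (Fin 3) (Fin 3) ℂ) (l : Fin 3) :
    g *ᵥ Pi.single l 1 = col3 g l := by
  funext r
  simp [Matrix.mulVec_single, col3]

lemma self_i : (QuaternionAlgebra.Basis.self ℂ (c₁ := -1) (c₂ := 0) (c₃ := -1)).i = qv (Pi.single 0 1) := by
  ext <;> simp [QuaternionAlgebra.Basis.self]

lemma self_j : (QuaternionAlgebra.Basis.self ℂ (c₁ := -1) (c₂ := 0) (c₃ := -1)).j = qv (Pi.single 1 1) := by
  ext <;> simp [QuaternionAlgebra.Basis.self, Pi.single_apply]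

def ΦAut (g : SO3C) : Quaternion ℂ ≃ₐ[ℂ] Quaternion ℂ :=
  AlgEquiv.ofAlgHom (Φhom g g.2) (Φhom gᵀ (transpose_mem g.2))
    (by
      apply Quaternion.hom_ext <;>
        first
        | rw [self_i, AlgHom.comp_apply, AlgHom.id_apply, Φhom_qv, Φhom_qv,
              Matrix.mulVec_mulVec, mul_eq_one_comm.mp g.2.1, Matrix.one_mulVec]
        | rw [self_j, AlgHom.comp_apply, AlgHom.id_apply, Φhom_qv, Φhom_qv,
              Matrix.mulVec_mulVec, mul_eq_one_comm.mp g.2.1, Matrix.one_mulVec])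
    (by
      apply Quaternion.hom_ext <;>
        first
        | rw [self_i, AlgHom.comp_apply, AlgHom.id_apply, Φhom_qv, Φhom_qv,
              Matrix.mulVec_mulVec, g.2.1, Matrix.one_mulVec]
        | rw [self_j, AlgHom.comp_apply, AlgHom.id_apply, Φhom_qv, Φhom_qv,
              Matrix.mulVec_mulVec, g.2.1, Matrix.one_mulVec])

lemma ΦAut_qv (g : SO3C) (v : Fin 3 → ℂ) : ΦAut g (qv v) = qv ((g : Matrix (Fin 3) (Fin 3) ℂ) *ᵥ v) :=
  Φhom_qv g.2 v

def Φ : SO3C →* (Quaternion ℂ ≃ₐ[ℂ] Quaternion ℂ) where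
  toFun := ΦAut
  map_one' := by
    apply AlgEquiv.coe_algHom_injective
    apply Quaternion.hom_ext <;>
      first
      | rw [self_i]
        show ΦAut 1 (qv (Pi.single 0 1)) = qv (Pi.single 0 1)
        rw [ΦAut_qv]
        show qv ((1 : Matrix (Fin 3) (Fin 3) ℂ) *ᵥ _) = _
        rw [Matrix.one_mulVec]
      | rw [self_j]
        show ΦAut 1 (qv (Pi.single 1 1)) = qv (Pi.single 1 1)
        rw [ΦAut_qv]
        show qv ((1 : Matrix (Fin 3) (Fin 3) ℂ) *ᵥ _) = _
        rw [Matrix.one_mulVec]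
  map_mul' g h := by
    apply AlgEquiv.coe_algHom_injective
    apply Quaternion.hom_ext <;>
      first
      | simp only [self_i]
        show ΦAut (g * h) (qv (Pi.single 0 1)) = ΦAut g (ΦAut h (qv (Pi.single 0 1)))
        rw [ΦAut_qv, ΦAut_qv, ΦAut_qv, Matrix.mulVec_mulVec]
        rfl
      | simp only [self_j]
        show ΦAut (g * h) (qv (Pi.single 1 1)) = ΦAut g (ΦAut h (qv (Pi.single 1 1)))
        rw [ΦAut_qv, ΦAut_qv, ΦAut_qv, Matrix.mulVec_mulVec]
        rfl

lemma Φ_injective : Function.Injective Φ := by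
  intro g h hgh
  ext r l
  have := congrArg (fun e : Quaternion ℂ ≃ₐ[ℂ] Quaternion ℂ => e (qv (Pi.single l 1))) hgh
  simp only [Φ, MonoidHom.coe_mk, OneHom.coe_mk, ΦAut_qv] at this
  have h2 := congrFun (qv_inj this) r
  simpa [mulVec_single3, col3] using h2

def imv (x : Quaternion ℂ) : Fin 3 → ℂ := ![x.imI, x.imJ, x.imK]

lemma qv_imv {x : Quaternion ℂ} (hx : x.re = 0) : qv (imv x) = x := by
  ext <;> simp [imv, hx]

lemma re_eq_zero_of (f : Quaternion ℂ ≃ₐ[ℂ] Quaternion ℂ) {u : Quaternion ℂ}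
    (hu : u * u = -1) (hnr : ∀ a : ℂ, u ≠ algebraMap ℂ (Quaternion ℂ) a) : (f u).re = 0 := by
  set x := f u with hx
  have hx2 : x * x = -1 := by rw [hx, ← _root_.map_mul, hu, map_neg, _root_.map_one]
  by_contra hre
  have hI : x.imI = 0 := by
    have h := congrArg QuaternionAlgebra.imI hx2
    simp only [Quaternion.imI_mul, Quaternion.imI_neg, Quaternion.imI_one, neg_zero] at h
    have h2 : (2 * x.re) * x.imI = 0 := by linear_combination h
    rcases mul_eq_zero.mp h2 with h3 | h3
    · exact absurd (by linear_combination h3 / 2) hre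
    · exact h3
  have hJ : x.imJ = 0 := by
    have h := congrArg QuaternionAlgebra.imJ hx2
    simp only [Quaternion.imJ_mul, Quaternion.imJ_neg, Quaternion.imJ_one, neg_zero] at h
    have h2 : (2 * x.re) * x.imJ = 0 := by linear_combination h
    rcases mul_eq_zero.mp h2 with h3 | h3
    · exact absurd (by linear_combination h3 / 2) hre
    · exact h3
  have hK : x.imK = 0 := by
    have h := congrArg QuaternionAlgebra.imK hx2
    simp only [Quaternion.imK_mul, Quaternion.imK_neg, Quaternion.imK_one, neg_zero] at h
    have h2 : (2 * x.re) * x.imK = 0 := by linear_combination h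
    rcases mul_eq_zero.mp h2 with h3 | h3
    · exact absurd (by linear_combination h3 / 2) hre
    · exact h3
  apply hnr x.re
  have hxeq : x = algebraMap ℂ (Quaternion ℂ) x.re := by
    ext
    · simp
    · simp [hI]
    · simp [hJ]
    · simp [hK]
  have h5 : u = f.symm x := (f.symm_apply_apply u).symm
  refine h5.trans ?_
  conv_lhs => rw [hxeq]
  rw [AlgEquiv.commutes]

lemma Φ_surjective : Function.Surjective Φ := by
  intro f
  set iQ : Quaternion ℂ := ⟨0,1,0,0⟩ with hiQdef
  set jQ : Quaternion ℂ := ⟨0,0,1,0⟩ with hjQdef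
  set kQ : Quaternion ℂ := ⟨0,0,0,1⟩ with hkQdef
  have hii : iQ * iQ = -1 := by ext <;> simp [hiQdef]
  have hjj : jQ * jQ = -1 := by ext <;> simp [hjQdef]
  have hkk : kQ * kQ = -1 := by ext <;> simp [hkQdef]
  have hij : iQ * jQ = kQ := by ext <;> simp [hiQdef, hjQdef, hkQdef]
  have hjk : jQ * kQ = iQ := by ext <;> simp [hiQdef, hjQdef, hkQdef]
  have hki : kQ * iQ = jQ := by ext <;> simp [hiQdef, hjQdef, hkQdef]
  have hnrI : ∀ a : ℂ, iQ ≠ algebraMap ℂ (Quaternion ℂ) a := fun a h => by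
    simpa [hiQdef] using congrArg QuaternionAlgebra.imI h
  have hnrJ : ∀ a : ℂ, jQ ≠ algebraMap ℂ (Quaternion ℂ) a := fun a h => by
    simpa [hjQdef] using congrArg QuaternionAlgebra.imJ h
  have hnrK : ∀ a : ℂ, kQ ≠ algebraMap ℂ (Quaternion ℂ) a := fun a h => by
    simpa [hkQdef] using congrArg QuaternionAlgebra.imK h
  have hxre : (f iQ).re = 0 := re_eq_zero_of f hii hnrI
  have hyre : (f jQ).re = 0 := re_eq_zero_of f hjj hnrJ
  have hzre : (f kQ).re = 0 := re_eq_zero_of f hkk hnrK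
  set vx := imv (f iQ) with hvx
  set vy := imv (f jQ) with hvy
  set vz := imv (f kQ) with hvz
  have hqx : qv vx = f iQ := qv_imv hxre
  have hqy : qv vy = f jQ := qv_imv hyre
  have hqz : qv vz = f kQ := qv_imv hzre
  -- products
  have hxy : qv vx * qv vy = qv vz := by
    rw [hqx, hqy, hqz, ← _root_.map_mul, hij]
  have hyz : qv vy * qv vz = qv vx := by
    rw [hqx, hqy, hqz, ← _root_.map_mul, hjk]
  have hzx : qv vz * qv vx = qv vy := by
    rw [hqx, hqy, hqz, ← _root_.map_mul, hki]
  have hxx : qv vx * qv vx = -1 := by rw [hqx, ← _root_.map_mul, hii, map_neg, _root_.map_one]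
  have hyy : qv vy * qv vy = -1 := by rw [hqy, ← _root_.map_mul, hjj, map_neg, _root_.map_one]
  have hzz : qv vz * qv vz = -1 := by rw [hqz, ← _root_.map_mul, hkk, map_neg, _root_.map_one]
  rw [qv_mul] at hxy hyz hzx hxx hyy hzz
  have hdxy : vx ⬝ᵥ vy = 0 := by
    have h := congrArg QuaternionAlgebra.re hxy
    simp only [qv] at h
    simp only [dotProduct, Fin.sum_univ_three] at h ⊢
    linear_combination -h
  have hdyz : vy ⬝ᵥ vz = 0 := by
    have h := congrArg QuaternionAlgebra.re hyz
    simp only [qv] at h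
    simp only [dotProduct, Fin.sum_univ_three] at h ⊢
    linear_combination -h
  have hdzx : vz ⬝ᵥ vx = 0 := by
    have h := congrArg QuaternionAlgebra.re hzx
    simp only [qv] at h
    simp only [dotProduct, Fin.sum_univ_three] at h ⊢
    linear_combination -h
  have hnx : vx ⬝ᵥ vx = 1 := by
    have h := congrArg QuaternionAlgebra.re hxx
    simp only [Quaternion.re_neg, Quaternion.re_one] at h
    simp only [dotProduct, Fin.sum_univ_three] at h ⊢
    linear_combination -h
  have hny : vy ⬝ᵥ vy = 1 := by
    have h := congrArg QuaternionAlgebra.re hyy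
    simp only [Quaternion.re_neg, Quaternion.re_one] at h
    simp only [dotProduct, Fin.sum_univ_three] at h ⊢
    linear_combination -h
  have hnz : vz ⬝ᵥ vz = 1 := by
    have h := congrArg QuaternionAlgebra.re hzz
    simp only [Quaternion.re_neg, Quaternion.re_one] at h
    simp only [dotProduct, Fin.sum_univ_three] at h ⊢
    linear_combination -h
  have hcyz : vy ⨯₃ vz = vx := by
    funext r
    fin_cases r
    · simpa [qv, imv] using congrArg QuaternionAlgebra.imI hyz
    · simpa [qv, imv] using congrArg QuaternionAlgebra.imJ hyz
    · simpa [qv, imv] using congrArg QuaternionAlgebra.imK hyz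
  -- the matrix
  set g : Matrix (Fin 3) (Fin 3) ℂ := (Matrix.of ![vx, vy, vz])ᵀ with hgdef
  have hcol : ∀ l, col3 g l = ![vx, vy, vz] l := fun l => rfl
  have hG1 : gᵀ * g = 1 := by
    ext l m
    have hentry : (gᵀ * g) l m = ![vx, vy, vz] l ⬝ᵥ ![vx, vy, vz] m := by
      rw [Matrix.mul_apply]; rfl
    rw [hentry]
    fin_cases l <;> fin_cases m <;>
      simp [Matrix.one_apply, hnx, hny, hnz, hdxy, hdyz, hdzx,
        (dotProduct_comm vx vy).symm.trans hdxy,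
        (dotProduct_comm vy vz).symm.trans hdyz,
        (dotProduct_comm vz vx).symm.trans hdzx]
  have hGdet : g.det = 1 := by
    rw [hgdef, Matrix.det_transpose]
    show Matrix.det ![vx, vy, vz] = 1
    rw [← triple_product_eq_det, hcyz, hnx]
  refine ⟨⟨g, hG1, hGdet⟩, ?_⟩
  have hiQ : qv (Pi.single 0 1) = iQ := by ext <;> simp [hiQdef, Pi.single_apply]
  have hjQ : qv (Pi.single 1 1) = jQ := by ext <;> simp [hjQdef, Pi.single_apply]
  apply AlgEquiv.coe_algHom_injective
  apply Quaternion.hom_ext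
  · simp only [self_i]
    show ΦAut ⟨g, hG1, hGdet⟩ (qv (Pi.single 0 1)) = f (qv (Pi.single 0 1))
    rw [ΦAut_qv, hiQ, ← hqx]
    congr 1
    rw [mulVec_single3, hcol]
    rfl
  · simp only [self_j]
    show ΦAut ⟨g, hG1, hGdet⟩ (qv (Pi.single 1 1)) = f (qv (Pi.single 1 1))
    rw [ΦAut_qv, hjQ, ← hqy]
    congr 1
    rw [mulVec_single3, hcol]
    rfl

/-- The automorphism group of the complexified quaternions is `SO₃(ℂ)`: there is a group
isomorphism `(Quaternion ℂ ≃ₐ[ℂ] Quaternion ℂ) ≃* SO₃(ℂ)`. -/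
theorem aut_complexified_quaternions_iso_SO3 :
    Nonempty ((Quaternion ℂ ≃ₐ[ℂ] Quaternion ℂ) ≃* SO3C) :=
  ⟨(MulEquiv.ofBijective Φ ⟨Φ_injective, Φ_surjective⟩).symm⟩
end
end

section
/- Transitivity of the automorphism group of the octonions on the unit sphere of imaginary octonions: let 𝕆 be the real octonions. If x, y ∈ 𝕆 satisfy Re x = Re y = 0 and q x = q y = 1 (imaginary, norm one), then there exists an ℝ-linear bijection φ : 𝕆 ≃ₗ[ℝ] 𝕆 with φ(a*b) = φ(a)*φ(b) for all a, b ∈ 𝕆 (an algebra automorphism of 𝕆) such that φ(x) = y. -/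
noncomputable section

/-- The octonionic norm `q (a, b) = normSq a + normSq b`. -/
def octNorm (x : Quaternion ℝ × Quaternion ℝ) : ℝ :=
  Quaternion.normSq x.1 + Quaternion.normSq x.2

namespace OctAux

open Quaternion

abbrev O := Quaternion ℝ × Quaternion ℝ

/-- Conjugation by `u` on both components. -/
def mapA (u : Quaternion ℝ) : O →ₗ[ℝ] O where
  toFun x := (u * x.1 * star u, u * x.2 * star u)
  map_add' x y := by
    simp only [Prod.fst_add, Prod.snd_add, mul_add, add_mul, Prod.mk_add_mk]
  map_smul' r x := by
    simp only [Prod.smul_fst, Prod.smul_snd, RingHom.id_apply, Prod.smul_mk,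
      Algebra.mul_smul_comm, Algebra.smul_mul_assoc]

/-- Left multiplication by `u` on the second component. -/
def mapB (u : Quaternion ℝ) : O →ₗ[ℝ] O where
  toFun x := (x.1, u * x.2)
  map_add' x y := by
    simp only [Prod.fst_add, Prod.snd_add, mul_add, Prod.mk_add_mk]
  map_smul' r x := by
    simp only [Prod.smul_fst, Prod.smul_snd, RingHom.id_apply, Prod.smul_mk,
      Algebra.mul_smul_comm]

/-- Rotation in the `(i, ℓ)` plane (and compensating rotation in the `(k, jℓ)` plane). -/
def mapR (c s : ℝ) : O →ₗ[ℝ] O where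
  toFun x := (⟨x.1.re, c * x.1.imI - s * x.2.re, x.1.imJ, c * x.1.imK + s * x.2.imJ⟩,
              ⟨s * x.1.imI + c * x.2.re, x.2.imI, -(s * x.1.imK) + c * x.2.imJ, x.2.imK⟩)
  map_add' x y := by ext <;> simp <;> erw [QuaternionAlgebra.mk_add_mk] <;> ring
  map_smul' r x := by ext <;> simp <;> erw [QuaternionAlgebra.smul_mk] <;> simp <;> ring

lemma conj_mul (u : Quaternion ℝ) (h1 : star u * u = 1) (p q : Quaternion ℝ) :
    (u * p * star u) * (u * q * star u) = u * (p * q) * star u := by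
  have key : ∀ t, star u * (u * t) = t := fun t => by rw [← mul_assoc, h1, one_mul]
  simp only [mul_assoc, key]

lemma conj_star (u p : Quaternion ℝ) : star (u * p * star u) = u * star p * star u := by
  simp [star_mul, mul_assoc]

def eA (u : Quaternion ℝ) (h1 : star u * u = 1) (h2 : u * star u = 1) : O ≃ₗ[ℝ] O :=
  { mapA u with
    invFun := fun x => (star u * x.1 * u, star u * x.2 * u)
    left_inv := fun x => by
      have k2 : ∀ t, star u * (u * t) = t := fun t => by rw [← mul_assoc, h1, one_mul]
      refine Prod.ext ?_ ?_ <;>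
        · show star u * (u * _ * star u) * u = _
          simp only [mul_assoc, k2, h1, mul_one]
    right_inv := fun x => by
      have k1 : ∀ t, u * (star u * t) = t := fun t => by rw [← mul_assoc, h2, one_mul]
      refine Prod.ext ?_ ?_ <;>
        · show u * (star u * _ * u) * star u = _
          simp only [mul_assoc, k1, h2, mul_one] }

lemma eA_apply (u : Quaternion ℝ) (h1 h2) (x : O) :
    eA u h1 h2 x = (u * x.1 * star u, u * x.2 * star u) := rfl

lemma eA_mul (u : Quaternion ℝ) (h1 : star u * u = 1) (h2 : u * star u = 1) (x y : O) :
    eA u h1 h2 (octMul x y) = octMul (eA u h1 h2 x) (eA u h1 h2 y) := by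
  simp only [eA_apply, octMul]
  refine Prod.ext ?_ ?_
  · simp only [mul_sub, sub_mul, conj_star, conj_mul u h1]
  · simp only [mul_add, add_mul, conj_star, conj_mul u h1]

def eB (u : Quaternion ℝ) (h1 : star u * u = 1) (h2 : u * star u = 1) : O ≃ₗ[ℝ] O :=
  { mapB u with
    invFun := fun x => (x.1, star u * x.2)
    left_inv := fun x => by
      have k2 : ∀ t, star u * (u * t) = t := fun t => by rw [← mul_assoc, h1, one_mul]
      exact Prod.ext rfl (k2 x.2)
    right_inv := fun x => by
      have k1 : ∀ t, u * (star u * t) = t := fun t => by rw [← mul_assoc, h2, one_mul]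
      exact Prod.ext rfl (k1 x.2) }

lemma eB_apply (u : Quaternion ℝ) (h1 h2) (x : O) :
    eB u h1 h2 x = (x.1, u * x.2) := rfl

lemma eB_mul (u : Quaternion ℝ) (h1 : star u * u = 1) (h2 : u * star u = 1) (x y : O) :
    eB u h1 h2 (octMul x y) = octMul (eB u h1 h2 x) (eB u h1 h2 y) := by
  have key : ∀ t, star u * (u * t) = t := fun t => by rw [← mul_assoc, h1, one_mul]
  simp only [eB_apply, octMul]
  refine Prod.ext ?_ ?_
  · simp only [star_mul, mul_assoc, key]
  · simp only [mul_add, mul_assoc]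

def eR (c s : ℝ) (h : c ^ 2 + s ^ 2 = 1) : O ≃ₗ[ℝ] O :=
  { mapR c s with
    invFun := fun x => (mapR c (-s)) x
    left_inv := fun x => by
      ext <;> dsimp only [mapR, LinearMap.coe_mk, AddHom.coe_mk] <;>
        first
          | rfl
          | linear_combination x.1.imI * h
          | linear_combination x.1.imK * h
          | linear_combination x.2.re * h
          | linear_combination x.2.imJ * h
    right_inv := fun x => by
      ext <;> dsimp only [mapR, LinearMap.coe_mk, AddHom.coe_mk] <;>
        first
          | rfl
          | linear_combination x.1.imI * h
          | linear_combination x.1.imK * h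
          | linear_combination x.2.re * h
          | linear_combination x.2.imJ * h }

lemma eR_apply (c s : ℝ) (h) (x : O) :
    eR c s h x = (⟨x.1.re, c * x.1.imI - s * x.2.re, x.1.imJ, c * x.1.imK + s * x.2.imJ⟩,
              ⟨s * x.1.imI + c * x.2.re, x.2.imI, -(s * x.1.imK) + c * x.2.imJ, x.2.imK⟩) := rfl

lemma eR_mul (c s : ℝ) (h : c ^ 2 + s ^ 2 = 1) (x y : O) :
    eR c s h (octMul x y) = octMul (eR c s h x) (eR c s h y) := by
  ext <;>
    simp only [octMul, re_mul, imI_mul, imJ_mul, imK_mul, re_sub, imI_sub, imJ_sub, imK_sub,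
      re_add, imI_add, imJ_add, imK_add, re_star, imI_star, imJ_star, imK_star] <;>
    simp only [eR_apply] <;>
    simp only [re_mul, imI_mul, imJ_mul, imK_mul, re_sub, imI_sub, imJ_sub, imK_sub,
      re_add, imI_add, imJ_add, imK_add, re_star, imI_star, imJ_star, imK_star] <;>
    first
      | linear_combination (x.2.imJ * y.2.imJ + x.2.re * y.2.re + x.1.imK * y.1.imK
          + x.1.imI * y.1.imI) * h
      | linear_combination (x.2.imJ * y.2.re - x.2.re * y.2.imJ - x.1.imK * y.1.imI
          + x.1.imI * y.1.imK) * h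
      | linear_combination (x.2.imJ * y.1.imK + x.2.re * y.1.imI - x.1.imK * y.2.imJ
          - x.1.imI * y.2.re) * h
      | linear_combination (-(x.2.imJ * y.1.imI) + x.2.re * y.1.imK - x.1.imK * y.2.re
          + x.1.imI * y.2.imJ) * h
      | ring

def jqu : Quaternion ℝ := ⟨0, 0, 1, 0⟩

lemma normalize_right (b : Quaternion ℝ) :
    ∃ v : Quaternion ℝ, star v * v = 1 ∧ v * star v = 1 ∧
      v * b = ((Real.sqrt (normSq b) : ℝ) : Quaternion ℝ) := by
  by_cases hb : b = 0
  · exact ⟨1, by simp, by simp, by simp [hb]⟩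
  · set t := Real.sqrt (normSq b) with ht
    have htpos : 0 < t :=
      Real.sqrt_pos.mpr (lt_of_le_of_ne normSq_nonneg (Ne.symm (normSq_ne_zero.mpr hb)))
    have ht2 : t ^ 2 = normSq b := Real.sq_sqrt normSq_nonneg
    have hscal : t⁻¹ * t⁻¹ * normSq b = 1 := by rw [← ht2]; field_simp
    refine ⟨(t⁻¹ : ℝ) • star b, ?_, ?_, ?_⟩
    · rw [Quaternion.star_smul, star_star, smul_mul_assoc, mul_smul_comm, smul_smul,
        self_mul_star, smul_coe, hscal]
      exact coe_one
    · rw [Quaternion.star_smul, star_star, smul_mul_assoc, mul_smul_comm, smul_smul,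
        star_mul_self, smul_coe, hscal]
      exact coe_one
    · rw [smul_mul_assoc, star_mul_self, smul_coe]
      congr 1
      rw [← ht2]
      field_simp

lemma conj_to_i (a : Quaternion ℝ) (ha : a.re = 0) :
    ∃ u : Quaternion ℝ, star u * u = 1 ∧ u * star u = 1 ∧
      u * a * star u = (⟨0, Real.sqrt (normSq a), 0, 0⟩ : Quaternion ℝ) := by
  set s := Real.sqrt (normSq a) with hs
  have hs0 : 0 ≤ s := Real.sqrt_nonneg _
  have hs2 : s ^ 2 = a.imI ^ 2 + a.imJ ^ 2 + a.imK ^ 2 := by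
    rw [hs, Real.sq_sqrt normSq_nonneg, normSq_def', ha]; ring
  by_cases hdeg : a = (⟨0, -s, 0, 0⟩ : Quaternion ℝ)
  · refine ⟨jqu, ?_, ?_, ?_⟩
    · ext <;> simp [re_mul, imI_mul, imJ_mul, imK_mul] <;> simp [jqu]
    · ext <;> simp [re_mul, imI_mul, imJ_mul, imK_mul] <;> simp [jqu]
    · ext <;> simp [re_mul, imI_mul, imJ_mul, imK_mul] <;> simp [hdeg, jqu]
  · have hne : s + a.imI ≠ 0 := by
      intro h0
      apply hdeg
      have hI : a.imI = -s := by linarith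
      rw [hI] at hs2
      have hJ : a.imJ = 0 := by nlinarith [sq_nonneg a.imJ, sq_nonneg a.imK]
      have hK : a.imK = 0 := by nlinarith [sq_nonneg a.imJ, sq_nonneg a.imK]
      ext <;> simp [ha, hI, hJ, hK]
    have hge : 0 ≤ s + a.imI := by
      nlinarith [hs2, hs0, sq_nonneg a.imJ, sq_nonneg a.imK, sq_nonneg (s + a.imI),
        sq_nonneg (s - a.imI)]
    have hpos : 0 < s + a.imI := lt_of_le_of_ne hge (Ne.symm hne)
    have hs_pos : 0 < s := by
      nlinarith [hs2, hs0, hpos, sq_nonneg a.imJ, sq_nonneg a.imK, sq_nonneg (s - a.imI)]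
    set u₀ : Quaternion ℝ := ⟨s + a.imI, 0, a.imK, -a.imJ⟩ with hu₀
    set sI : Quaternion ℝ := ⟨0, s, 0, 0⟩ with hsI
    have hnu₀ : normSq u₀ = 2 * s * (s + a.imI) := by
      rw [normSq_def']; simp only [hu₀]; linear_combination -hs2
    have hnu₀pos : 0 < normSq u₀ := by rw [hnu₀]; positivity
    set n := Real.sqrt (normSq u₀) with hn
    have hn2 : n ^ 2 = normSq u₀ := Real.sq_sqrt normSq_nonneg
    have hnpos : 0 < n := Real.sqrt_pos.mpr hnu₀pos
    have hscal : n⁻¹ * n⁻¹ * normSq u₀ = 1 := by rw [← hn2]; field_simp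
    have hkey : u₀ * a = sI * u₀ := by
      ext
      · simp only [re_mul, imI_mul, imJ_mul, imK_mul, ha]; simp only [hu₀, hsI]; ring
      · simp only [re_mul, imI_mul, imJ_mul, imK_mul, ha]; simp only [hu₀, hsI]
        linear_combination -hs2
      · simp only [re_mul, imI_mul, imJ_mul, imK_mul, ha]; simp only [hu₀, hsI]; ring
      · simp only [re_mul, imI_mul, imJ_mul, imK_mul, ha]; simp only [hu₀, hsI]; ring
    refine ⟨(n⁻¹ : ℝ) • u₀, ?_, ?_, ?_⟩
    · rw [Quaternion.star_smul, smul_mul_assoc, mul_smul_comm, smul_smul,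
        star_mul_self, smul_coe, hscal]
      exact coe_one
    · rw [Quaternion.star_smul, smul_mul_assoc, mul_smul_comm, smul_smul,
        self_mul_star, smul_coe, hscal]
      exact coe_one
    · rw [Quaternion.star_smul, smul_mul_assoc, smul_mul_assoc, mul_smul_comm, smul_smul,
        hkey, mul_assoc, self_mul_star, mul_coe_eq_smul, smul_smul, hscal, one_smul]


/-- Every imaginary octonion of norm one can be moved to `(i, 0)` by an automorphism. -/
lemma exists_to_i (x : O) (hIm : x.1.re = 0) (hQ : octNorm x = 1) :
    ∃ φ : O ≃ₗ[ℝ] O, (∀ a b, φ (octMul a b) = octMul (φ a) (φ b)) ∧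
      φ x = ((⟨0, 1, 0, 0⟩ : Quaternion ℝ), 0) := by
  obtain ⟨u, hu1, hu2, hua⟩ := conj_to_i x.1 hIm
  set s := Real.sqrt (normSq x.1) with hs
  set b' := u * x.2 * star u with hb'
  have hnormu : normSq u = 1 := by
    have := star_mul_self u
    rw [hu1] at this
    exact_mod_cast congrArg QuaternionAlgebra.re this.symm
  have hb'n : normSq b' = normSq x.2 := by
    rw [hb', map_mul, map_mul, normSq_star, hnormu]; ring
  obtain ⟨v, hv1, hv2, hvb⟩ := normalize_right b'
  set t := Real.sqrt (normSq x.2) with htdef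
  have hvb' : v * b' = ((t : ℝ) : Quaternion ℝ) := by rw [hvb, hb'n]
  have hs2 : s ^ 2 = normSq x.1 := Real.sq_sqrt normSq_nonneg
  have ht2 : t ^ 2 = normSq x.2 := Real.sq_sqrt normSq_nonneg
  have hrot : s ^ 2 + (-t) ^ 2 = 1 := by
    have : normSq x.1 + normSq x.2 = 1 := hQ
    rw [neg_pow]; simp only [hs2, ht2]; linarith [this]
  refine ⟨((eA u hu1 hu2).trans (eB v hv1 hv2)).trans (eR s (-t) hrot), ?_, ?_⟩
  · intro a b
    simp only [LinearEquiv.trans_apply, eA_mul, eB_mul, eR_mul]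
  · simp only [LinearEquiv.trans_apply]
    rw [show eA u hu1 hu2 x = ((⟨0, s, 0, 0⟩ : Quaternion ℝ), b') from Prod.ext hua rfl]
    erw [show eB v hv1 hv2 ((⟨0, s, 0, 0⟩ : Quaternion ℝ), b')
        = ((⟨0, s, 0, 0⟩ : Quaternion ℝ), ((t : ℝ) : Quaternion ℝ)) from Prod.ext rfl hvb']
    erw [eR_apply]
    refine Prod.ext ?_ ?_
    · ext <;> simp <;> linear_combination hrot
    · ext <;> simp <;> ring

end OctAux

/-- The automorphism group of the octonions acts transitively on the unit sphere of
imaginary octonions: any two imaginary octonions of norm one are related by an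
algebra automorphism of `𝕆`. -/
theorem octonion_aut_transitive_unit_sphere
    (x y : Quaternion ℝ × Quaternion ℝ)
    (hxIm : x.1.re = 0) (hyIm : y.1.re = 0)
    (hxQ : octNorm x = 1) (hyQ : octNorm y = 1) :
    ∃ φ : (Quaternion ℝ × Quaternion ℝ) ≃ₗ[ℝ] (Quaternion ℝ × Quaternion ℝ),
      (∀ a b, φ (octMul a b) = octMul (φ a) (φ b)) ∧ φ x = y := by
  obtain ⟨φx, hφx, hx⟩ := OctAux.exists_to_i x hxIm hxQ
  obtain ⟨φy, hφy, hy⟩ := OctAux.exists_to_i y hyIm hyQ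
  have hφy' : ∀ a b, φy.symm (octMul a b) = octMul (φy.symm a) (φy.symm b) := by
    intro a b
    apply φy.injective
    rw [φy.apply_symm_apply, hφy, φy.apply_symm_apply, φy.apply_symm_apply]
  refine ⟨φx.trans φy.symm, ?_, ?_⟩
  · intro a b
    simp only [LinearEquiv.trans_apply, hφx, hφy']
  · simp only [LinearEquiv.trans_apply, hx, ← hy, φy.symm_apply_apply]
end
end
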